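/- arXiv:2602.06752 — 6 statements merged into one kernel-verified Lean document; each statement's English description precedes it below -/
import Mathlib

section
/- For any subset X of ℓ^∞, the set U_N(X) of nearly X-universal functions is closed in C(ℝ) equipped with the metric d_∞(f,g) = min(‖f−g‖_∞, 1). -/
open Filter Set

/-- The metric d_∞(f,g) = min(‖f−g‖_∞, 1) on functions ℝ → ℝ (value 1 if sup is infinite). -/
noncomputable def dinf (f g : ℝ → ℝ) : ℝ :=
  (min (⨆ x : ℝ, ENNReal.ofReal |f x - g x|) 1).toReal

/-- x is a bounded sequence, i.e. x ∈ ℓ^∞. -/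
def Bdd (x : ℕ → ℝ) : Prop := ∃ C : ℝ, ∀ n : ℕ, |x n| ≤ C

/-- sup_n |f(t+n) − x_n|, computed in ℝ≥0∞. -/
noncomputable def gapSup (f : ℝ → ℝ) (x : ℕ → ℝ) (t : ℝ) : ENNReal :=
  ⨆ n : ℕ, ENNReal.ofReal |f (t + n) - x n|

/-- f ∈ U(X): f is an X-universal interpolating function. -/
def memU (X : Set (ℕ → ℝ)) (f : ℝ → ℝ) : Prop :=
  Continuous f ∧ ∀ x ∈ X, ∃ t : ℝ, ∀ n : ℕ, f (t + n) = x n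

/-- f ∈ U_N(X): f is nearly X-universal. -/
def memUN (X : Set (ℕ → ℝ)) (f : ℝ → ℝ) : Prop :=
  Continuous f ∧ ∀ x ∈ X, (⨅ t : ℝ, gapSup f x t) = 0

/-- f is piecewise affine with locally finitely many breakpoints. -/
def PWAffine (f : ℝ → ℝ) : Prop :=
  ∃ z : ℤ → ℝ, StrictMono z ∧ Tendsto z atTop atTop ∧ Tendsto z atBot atBot ∧
    ∀ n : ℤ, ∃ a b : ℝ, ∀ x ∈ Set.Icc (z n) (z (n + 1)), f x = a * x + b

/-- span(𝟏): the set of constant sequences. -/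
def spanOne : Set (ℕ → ℝ) := {x | ∃ c : ℝ, x = fun _ => c}

/-- dist(x, span(𝟏)) computed in ℝ≥0∞. -/
noncomputable def distSpanOne (x : ℕ → ℝ) : ENNReal :=
  ⨅ c : ℝ, ⨆ n : ℕ, ENNReal.ofReal |x n - c|

/-- U_N(X) is closed in (C(ℝ), d_∞): its complement within C(ℝ) is open. -/
theorem stmt2 (X : Set (ℕ → ℝ)) (hX : ∀ x ∈ X, Bdd x) :
    ∀ f : ℝ → ℝ, Continuous f → ¬ memUN X f →
      ∃ r > (0 : ℝ), ∀ g : ℝ → ℝ, Continuous g → dinf f g < r → ¬ memUN X g := by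
  intro f hf hfn
  -- extract a witness sequence with positive infimum gap
  have hx : ∃ x ∈ X, (⨅ t : ℝ, gapSup f x t) ≠ 0 := by
    by_contra h
    push_neg at h
    exact hfn ⟨hf, fun x hxX => h x hxX⟩
  obtain ⟨x, hxX, hε⟩ := hx
  set ε : ENNReal := ⨅ t : ℝ, gapSup f x t with hεdef
  set ε' : ENNReal := min ε 1 with hε'def
  have hε'ne : ε' ≠ 0 :=
    (lt_min (pos_iff_ne_zero.mpr hε) one_pos).ne' 
  have hε'top : ε' ≠ ⊤ := ne_top_of_le_ne_top ENNReal.one_ne_top (min_le_right _ _)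
  have hε'pos : 0 < ε'.toReal := ENNReal.toReal_pos hε'ne hε'top
  refine ⟨ε'.toReal / 2, by positivity, fun g hg hdg hgUN => ?_⟩
  -- S := sup norm of f - g in ENNReal
  set S : ENNReal := ⨆ y : ℝ, ENNReal.ofReal |f y - g y| with hSdef
  have hr1 : ε'.toReal / 2 ≤ 1 / 2 := by
    have : ε'.toReal ≤ 1 := by
      have := ENNReal.toReal_mono ENNReal.one_ne_top (min_le_right ε 1)
      simpa using this
    linarith
  have hmin : min S 1 < ENNReal.ofReal (ε'.toReal / 2) := by
    rw [ENNReal.lt_ofReal_iff_toReal_lt (ne_top_of_le_ne_top ENNReal.one_ne_top (min_le_right _ _))]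
    exact hdg
  have hSlt : S < ENNReal.ofReal (ε'.toReal / 2) := by
    rcases le_or_gt S 1 with h | h
    · rwa [min_eq_left h] at hmin
    · exfalso
      rw [min_eq_right h.le] at hmin
      have : ENNReal.ofReal (ε'.toReal / 2) ≤ 1 := by
        rw [show (1 : ENNReal) = ENNReal.ofReal 1 by simp]
        exact ENNReal.ofReal_le_ofReal (by linarith)
      exact absurd (hmin.trans_le this) (lt_irrefl 1)
  have hofr : ENNReal.ofReal (ε'.toReal / 2) = ε' / 2 := by
    rw [ENNReal.ofReal_div_of_pos (by norm_num), ENNReal.ofReal_toReal hε'top]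
    norm_num
  -- triangle inequality: gapSup f x t ≤ gapSup g x t + S
  have htri : ∀ t : ℝ, gapSup f x t ≤ gapSup g x t + S := by
    intro t
    simp only [gapSup]
    refine iSup_le fun n => ?_
    have h1 : |f (t + n) - x n| ≤ |g (t + n) - x n| + |f (t + n) - g (t + n)| := by
      have := abs_sub_abs_le_abs_sub (f (t + n) - x n) (g (t + n) - x n)
      calc |f (t + n) - x n| ≤ |g (t + n) - x n| + |(f (t + n) - x n) - (g (t + n) - x n)| := by
            have := abs_sub (f (t + n) - x n) (g (t + n) - x n)
            nlinarith [abs_sub_abs_le_abs_sub (f (t + n) - x n) (g (t + n) - x n),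
              abs_nonneg ((f (t + n) - x n) - (g (t + n) - x n)),
              abs_sub_le (f (t+n) - x n) (g (t+n) - x n) 0]
        _ = |g (t + n) - x n| + |f (t + n) - g (t + n)| := by ring_nf
    calc ENNReal.ofReal |f (t + n) - x n|
        ≤ ENNReal.ofReal (|g (t + n) - x n| + |f (t + n) - g (t + n)|) :=
          ENNReal.ofReal_le_ofReal h1
      _ ≤ ENNReal.ofReal |g (t + n) - x n| + ENNReal.ofReal |f (t + n) - g (t + n)| :=
          ENNReal.ofReal_add_le
      _ ≤ (⨆ m : ℕ, ENNReal.ofReal |g (t + m) - x m|) + S :=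
          add_le_add (le_iSup (fun m : ℕ => ENNReal.ofReal |g (t + m) - x m|) n)
            (le_iSup (fun y => ENNReal.ofReal |f y - g y|) (t + n))
  have hg0 : (⨅ t : ℝ, gapSup g x t) = 0 := hgUN.2 x hxX
  have hεleS : ε ≤ S := by
    have : ε ≤ ⨅ t : ℝ, (gapSup g x t + S) := le_iInf fun t => (iInf_le _ t).trans (htri t)
    rwa [← ENNReal.iInf_add, hg0, zero_add] at this
  have : ε' < ε' / 2 := lt_of_le_of_lt (le_trans (min_le_left ε 1) hεleS) (hofr ▸ hSlt)
  exact absurd this (not_lt.mpr (ENNReal.half_le_self))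
end

section
/- Let X ⊆ ℓ^∞ contain the zero sequence 𝟎 and satisfy span(𝟏) + X ⊆ X. Then every continuous piecewise affine function (with locally finitely many breakpoints) lies in the closure of C(ℝ) \ U_N(X) with respect to d_∞; i.e., for every such f and every ε > 0 there exists g ∈ C(ℝ) with d_∞(f,g) < ε that is not nearly X-universal. -/
open Filter Set

noncomputable section StairAux

/-- clamp to [0,1] -/
def clamp01 (y : ℝ) : ℝ := max 0 (min y 1)

lemma clamp01_nonneg (y : ℝ) : 0 ≤ clamp01 y := le_max_left _ _

lemma clamp01_le_one (y : ℝ) : clamp01 y ≤ 1 := max_le (by norm_num) (min_le_right _ _)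

lemma clamp01_of_nonpos {y : ℝ} (h : y ≤ 0) : clamp01 y = 0 :=
  max_eq_left ((min_le_left _ _).trans h)

lemma clamp01_of_one_le {y : ℝ} (h : 1 ≤ y) : clamp01 y = 1 := by
  rw [clamp01, min_eq_right h]; norm_num

lemma continuous_clamp01 : Continuous clamp01 :=
  continuous_const.max (continuous_id.min continuous_const)

/-- anchors -/
def anch (Q : ℕ) (i : ℤ) (k : ℕ) : ℝ := 2*(i:ℝ) + 2*(k:ℝ)/(Q:ℝ)

/-- plateau values -/
def vval (f : ℝ → ℝ) (γ : ℝ) (Q : ℕ) (i : ℤ) (k : ℕ) : ℝ := γ * round (f (anch Q i k) / γ)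

/-- the staircase on block i -/
def Gb (f : ℝ → ℝ) (γ : ℝ) (Q : ℕ) (i : ℤ) (x : ℝ) : ℝ :=
  vval f γ Q i 0 + ∑ k ∈ Finset.range Q,
    (vval f γ Q i (k+1) - vval f γ Q i k) * clamp01 ((Q:ℝ)*(x - anch Q i k) - 1/2)

/-- the global staircase -/
def gg (f : ℝ → ℝ) (γ : ℝ) (Q : ℤ → ℕ) (x : ℝ) : ℝ := Gb f γ (Q ⌊x/2⌋) ⌊x/2⌋ x

lemma anch_zero (Q : ℕ) (i : ℤ) : anch Q i 0 = 2*(i:ℝ) := by simp [anch]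

lemma anch_last (Q : ℕ) (hQ : 0 < Q) (i : ℤ) : anch Q i Q = 2*(i:ℝ) + 2 := by
  have hQ0 : (Q:ℝ) ≠ 0 := by positivity
  unfold anch
  rw [mul_div_assoc, div_self hQ0]; ring

lemma anch_le_anch (Q : ℕ) (i : ℤ) {k l : ℕ} (h : k ≤ l) : anch Q i k ≤ anch Q i l := by
  unfold anch
  have hk : (k:ℝ) ≤ l := by exact_mod_cast h
  have hQ : (0:ℝ) ≤ (Q:ℝ) := by positivity
  gcongr

lemma anch_succ_sub (Q : ℕ) (hQ : 0 < Q) (i : ℤ) (k : ℕ) :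
    anch Q i (k+1) - anch Q i k = 2/(Q:ℝ) := by
  have hQ0 : (Q:ℝ) ≠ 0 := by positivity
  unfold anch
  push_cast
  field_simp
  ring

lemma Gb_eval (f : ℝ → ℝ) (γ : ℝ) (Q : ℕ) (i : ℤ) (k : ℕ) (hk : k < Q) (x : ℝ)
    (h1 : anch Q i k ≤ x) (h2 : x ≤ anch Q i (k+1)) :
    Gb f γ Q i x = vval f γ Q i k + (vval f γ Q i (k+1) - vval f γ Q i k) *
      clamp01 ((Q:ℝ)*(x - anch Q i k) - 1/2) := by
  have hQ : 0 < Q := lt_of_le_of_lt (Nat.zero_le k) hk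
  have hQR : (0:ℝ) < (Q:ℝ) := by exact_mod_cast hQ
  set F : ℕ → ℝ := fun j =>
    (vval f γ Q i (j+1) - vval f γ Q i j) * clamp01 ((Q:ℝ)*(x - anch Q i j) - 1/2) with hF
  have hsplit : ∑ j ∈ Finset.range Q, F j
      = ∑ j ∈ Finset.range (k+1), F j + ∑ j ∈ Finset.Ico (k+1) Q, F j :=
    (Finset.sum_range_add_sum_Ico F (Nat.succ_le_of_lt hk)).symm
  have hlow : ∀ j ∈ Finset.range k, F j = vval f γ Q i (j+1) - vval f γ Q i j := by
    intro j hj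
    have hj' : j < k := Finset.mem_range.mp hj
    have hle : anch Q i (j+1) ≤ anch Q i k := anch_le_anch Q i hj'
    have hd : anch Q i (j+1) - anch Q i j = 2/(Q:ℝ) := anch_succ_sub Q hQ i j
    have harg : (1:ℝ) ≤ (Q:ℝ)*(x - anch Q i j) - 1/2 := by
      have h3 : anch Q i j + 2/(Q:ℝ) ≤ x := by linarith
      have h4 : (Q:ℝ) * (2/(Q:ℝ)) = 2 := by field_simp
      nlinarith
    rw [hF]
    simp only []
    rw [clamp01_of_one_le harg, mul_one]
  have hhigh : ∀ j ∈ Finset.Ico (k+1) Q, F j = 0 := by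
    intro j hj
    have hj' : k+1 ≤ j := (Finset.mem_Ico.mp hj).1
    have hle : anch Q i (k+1) ≤ anch Q i j := anch_le_anch Q i hj'
    have harg : (Q:ℝ)*(x - anch Q i j) - 1/2 ≤ 0 := by nlinarith
    rw [hF]
    simp only []
    rw [clamp01_of_nonpos harg, mul_zero]
  have htel : ∑ j ∈ Finset.range k, F j = vval f γ Q i k - vval f γ Q i 0 := by
    rw [Finset.sum_congr rfl hlow, Finset.sum_range_sub (fun j => vval f γ Q i j)]
  calc Gb f γ Q i x = vval f γ Q i 0 + ∑ j ∈ Finset.range Q, F j := rfl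
    _ = vval f γ Q i 0 + ((∑ j ∈ Finset.range k, F j + F k) + ∑ j ∈ Finset.Ico (k+1) Q, F j) := by
        rw [hsplit, Finset.sum_range_succ]
    _ = vval f γ Q i 0 + ((vval f γ Q i k - vval f γ Q i 0 + F k) + 0) := by
        rw [htel, Finset.sum_eq_zero hhigh]
    _ = vval f γ Q i k + (vval f γ Q i (k+1) - vval f γ Q i k) *
          clamp01 ((Q:ℝ)*(x - anch Q i k) - 1/2) := by rw [hF]; ring

lemma exists_cell (Q : ℕ) (hQ : 0 < Q) (i : ℤ) (x : ℝ)
    (hx1 : 2*(i:ℝ) ≤ x) (hx2 : x ≤ 2*(i:ℝ)+2) :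
    ∃ k : ℕ, k < Q ∧ anch Q i k ≤ x ∧ x ≤ anch Q i (k+1) := by
  have hQR : (0:ℝ) < (Q:ℝ) := by exact_mod_cast hQ
  set y : ℝ := (Q:ℝ) * (x - 2*(i:ℝ)) / 2 with hy
  have hy0 : 0 ≤ y := by rw [hy]; apply div_nonneg; nlinarith; norm_num
  have hyQ : y ≤ (Q:ℝ) := by rw [hy]; rw [div_le_iff₀ (by norm_num : (0:ℝ) < 2)]; nlinarith
  have hxy : x = 2*(i:ℝ) + 2*y/(Q:ℝ) := by rw [hy]; field_simp; ring
  rcases lt_or_ge y (Q:ℝ) with hlt | hge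
  · set K : ℕ := ⌊y⌋.toNat with hK
    have hKy : (K:ℝ) ≤ y := by
      rw [hK]
      have h1 : (⌊y⌋ : ℝ) ≤ y := Int.floor_le y
      have h2 : (⌊y⌋.toNat : ℤ) = ⌊y⌋ := Int.toNat_of_nonneg (Int.floor_nonneg.mpr hy0)
      have h3 : ((⌊y⌋.toNat : ℤ) : ℝ) = ((⌊y⌋ : ℤ) : ℝ) := by rw [h2]
      push_cast at h3
      linarith
    have hyK : y < (K:ℝ) + 1 := by
      rw [hK]
      have h1 : y < (⌊y⌋ : ℝ) + 1 := Int.lt_floor_add_one y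
      have h2 : (⌊y⌋.toNat : ℤ) = ⌊y⌋ := Int.toNat_of_nonneg (Int.floor_nonneg.mpr hy0)
      have h3 : ((⌊y⌋.toNat : ℤ) : ℝ) = ((⌊y⌋ : ℤ) : ℝ) := by rw [h2]
      push_cast at h3
      linarith
    refine ⟨K, ?_, ?_, ?_⟩
    · have : (K:ℝ) < (Q:ℝ) := lt_of_le_of_lt hKy hlt
      exact_mod_cast this
    · rw [hxy]
      unfold anch
      have : 2*(K:ℝ)/(Q:ℝ) ≤ 2*y/(Q:ℝ) := by gcongr
      linarith
    · rw [hxy]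
      unfold anch
      push_cast
      have : 2*y/(Q:ℝ) ≤ 2*((K:ℝ)+1)/(Q:ℝ) := by gcongr <;> linarith
      linarith
  · have hyeq : y = (Q:ℝ) := le_antisymm hyQ hge
    have hxeq : x = 2*(i:ℝ)+2 := by
      rw [hxy, hyeq]; field_simp
    obtain ⟨Q', rfl⟩ : ∃ Q', Q = Q'+1 := ⟨Q-1, (Nat.succ_pred_eq_of_pos hQ).symm⟩
    refine ⟨Q', Nat.lt_succ_self _, ?_, ?_⟩
    · rw [hxeq]
      have h := anch_le_anch (Q'+1) i (Nat.le_succ Q')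
      rw [anch_last (Q'+1) hQ i] at h
      linarith
    · rw [hxeq, anch_last (Q'+1) hQ i]

lemma Gb_at_left (f : ℝ → ℝ) (γ : ℝ) (Q : ℕ) (hQ : 0 < Q) (i : ℤ) :
    Gb f γ Q i (2*(i:ℝ)) = γ * round (f (2*(i:ℝ)) / γ) := by
  have hQR : (0:ℝ) < (Q:ℝ) := by exact_mod_cast hQ
  have hd : anch Q i 1 - anch Q i 0 = 2/(Q:ℝ) := anch_succ_sub Q hQ i 0
  have h0 : anch Q i 0 = 2*(i:ℝ) := anch_zero Q i
  have h1 : anch Q i 0 ≤ 2*(i:ℝ) := h0.le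
  have h2 : (2*(i:ℝ)) ≤ anch Q i (0+1) := by
    have hp : (0:ℝ) < 2/(Q:ℝ) := by positivity
    have e : anch Q i (0+1) = 2*(i:ℝ) + 2/(Q:ℝ) := by
      have h := anch_succ_sub Q hQ i 0
      rw [h0] at h; linarith
    rw [e]; linarith
  have harg : (Q:ℝ)*((2*(i:ℝ)) - anch Q i 0) - 1/2 ≤ 0 := by
    rw [h0]; ring_nf; norm_num
  rw [Gb_eval f γ Q i 0 hQ _ h1 h2, clamp01_of_nonpos harg, mul_zero, add_zero, vval, h0]

lemma Gb_at_right (f : ℝ → ℝ) (γ : ℝ) (Q : ℕ) (hQ : 0 < Q) (i : ℤ) :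
    Gb f γ Q i (2*(i:ℝ)+2) = γ * round (f (2*(i:ℝ)+2) / γ) := by
  have hQR : (0:ℝ) < (Q:ℝ) := by exact_mod_cast hQ
  obtain ⟨Q', rfl⟩ : ∃ Q', Q = Q'+1 := ⟨Q-1, (Nat.succ_pred_eq_of_pos hQ).symm⟩
  have hlast : anch (Q'+1) i (Q'+1) = 2*(i:ℝ)+2 := anch_last (Q'+1) hQ i
  have h1 : anch (Q'+1) i Q' ≤ 2*(i:ℝ)+2 := by
    rw [← hlast]; exact anch_le_anch _ i (Nat.le_succ Q')
  have h2 : (2*(i:ℝ)+2) ≤ anch (Q'+1) i (Q'+1) := hlast.symm.le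
  rw [Gb_eval f γ (Q'+1) i Q' (Nat.lt_succ_self _) _ h1 h2]
  have hd : anch (Q'+1) i (Q'+1) - anch (Q'+1) i Q' = 2/((Q'+1:ℕ):ℝ) := anch_succ_sub _ hQ i Q'
  have harg : (1:ℝ) ≤ ((Q'+1:ℕ):ℝ)*((2*(i:ℝ)+2) - anch (Q'+1) i Q') - 1/2 := by
    have h4 : ((Q'+1:ℕ):ℝ) * (2/((Q'+1:ℕ):ℝ)) = 2 := by field_simp
    nlinarith [hd, hlast]
  rw [clamp01_of_one_le harg, mul_one]
  simp only [vval]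
  rw [hlast]
  ring

lemma Gb_continuous (f : ℝ → ℝ) (γ : ℝ) (Q : ℕ) (i : ℤ) : Continuous (Gb f γ Q i) := by
  unfold Gb
  refine continuous_const.add (continuous_finset_sum _ fun k _ => continuous_const.mul ?_)
  exact continuous_clamp01.comp
    (((continuous_const.mul (continuous_id.sub continuous_const)).sub continuous_const))

lemma gg_eq_Gb (f : ℝ → ℝ) (γ : ℝ) (Q : ℤ → ℕ) (i : ℤ) (x : ℝ)
    (h1 : 2*(i:ℝ) ≤ x) (h2 : x < 2*(i:ℝ)+2) :
    gg f γ Q x = Gb f γ (Q i) i x := by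
  have hfl : ⌊x/2⌋ = i := by
    rw [Int.floor_eq_iff]
    constructor
    · linarith
    · push_cast; linarith
  rw [gg, hfl]

lemma gg_eqOn_block (f : ℝ → ℝ) (γ : ℝ) (Q : ℤ → ℕ) (hQ : ∀ j, 0 < Q j) (i : ℤ) :
    Set.EqOn (gg f γ Q) (Gb f γ (Q i) i) (Icc (2*(i:ℝ)) (2*(i:ℝ)+2)) := by
  intro x hx
  obtain ⟨h1, h2⟩ := hx
  rcases lt_or_eq_of_le h2 with h2' | h2'
  · exact gg_eq_Gb f γ Q i x h1 h2'
  · have e1 : 2*((i+1 : ℤ):ℝ) ≤ x := by push_cast; linarith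
    have e2 : x < 2*((i+1 : ℤ):ℝ)+2 := by push_cast; linarith
    have e4 : x = 2*(i:ℝ)+2 := h2'
    have hA := Gb_at_left f γ (Q (i+1)) (hQ (i+1)) (i+1)
    have hB := Gb_at_right f γ (Q i) (hQ i) i
    have ecast : 2*((i+1 : ℤ):ℝ) = 2*(i:ℝ)+2 := by push_cast; ring
    rw [ecast] at hA
    rw [gg_eq_Gb f γ Q (i+1) x e1 e2, e4, hA, hB]

lemma gg_continuous (f : ℝ → ℝ) (γ : ℝ) (Q : ℤ → ℕ) (hQ : ∀ j, 0 < Q j) :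
    Continuous (gg f γ Q) := by
  rw [continuous_iff_continuousAt]
  intro x
  set i : ℤ := ⌊x/2⌋ with hi
  have h1 : 2*(i:ℝ) ≤ x := by
    have := Int.floor_le (x/2); rw [← hi] at this; linarith
  have h2 : x < 2*(i:ℝ)+2 := by
    have := Int.lt_floor_add_one (x/2); rw [← hi] at this; linarith
  have hcb : ∀ j : ℤ, ContinuousOn (gg f γ Q) (Icc (2*(j:ℝ)) (2*(j:ℝ)+2)) := fun j =>
    (Gb_continuous f γ (Q j) j).continuousOn.congr (gg_eqOn_block f γ Q hQ j)
  have hl : ContinuousWithinAt (gg f γ Q) (Icc (2*(i:ℝ)-2) (2*(i:ℝ))) x := by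
    rcases eq_or_lt_of_le h1 with heq | hlt
    · have ecast : 2*((i-1:ℤ):ℝ) = 2*(i:ℝ)-2 := by push_cast; ring
      have eset : Icc (2*((i-1:ℤ):ℝ)) (2*((i-1:ℤ):ℝ)+2) = Icc (2*(i:ℝ)-2) (2*(i:ℝ)) := by
        rw [ecast]; congr 1; ring
      have hcw := (hcb (i-1)) x (by
        rw [eset]; exact ⟨by linarith, by linarith⟩)
      rw [eset] at hcw
      exact hcw
    · refine continuousWithinAt_of_notMem_closure ?_
      rw [IsClosed.closure_eq isClosed_Icc]
      intro hmem
      exact absurd hmem.2 (not_le.mpr hlt)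
  have hr : ContinuousWithinAt (gg f γ Q) (Icc (2*(i:ℝ)) (2*(i:ℝ)+2)) x :=
    (hcb i) x ⟨h1, h2.le⟩
  have hu := hl.union hr
  rw [Set.Icc_union_Icc_eq_Icc (by linarith) (by linarith)] at hu
  exact hu.continuousAt (Icc_mem_nhds (by linarith) (by linarith))

lemma round_close (γ : ℝ) (hγ : 0 < γ) (z : ℝ) : |γ * round (z/γ) - z| ≤ γ/2 := by
  have h := abs_sub_round (z/γ)
  have hγ0 : γ ≠ 0 := hγ.ne'
  have e : γ * round (z/γ) - z = -(γ * (z/γ - round (z/γ))) := by field_simp; ring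
  rw [e, abs_neg, abs_mul, abs_of_pos hγ]
  calc γ * |z/γ - (round (z/γ) : ℝ)| ≤ γ * (1/2) := mul_le_mul_of_nonneg_left h hγ.le
    _ = γ/2 := by ring

lemma Gb_close (f : ℝ → ℝ) (γ : ℝ) (hγ : 0 < γ) (Q : ℕ) (hQ : 0 < Q) (i : ℤ)
    (hUC : ∀ x ∈ Icc (2*(i:ℝ)) (2*(i:ℝ)+2), ∀ y ∈ Icc (2*(i:ℝ)) (2*(i:ℝ)+2),
      |x - y| ≤ 4/(Q:ℝ) → |f x - f y| ≤ γ/2)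
    (x : ℝ) (hx : x ∈ Icc (2*(i:ℝ)) (2*(i:ℝ)+2)) : |Gb f γ Q i x - f x| ≤ γ := by
  have hQR : (0:ℝ) < (Q:ℝ) := by exact_mod_cast hQ
  obtain ⟨k, hk, h1, h2⟩ := exists_cell Q hQ i x hx.1 hx.2
  have hsucc : anch Q i (k+1) - anch Q i k = 2/(Q:ℝ) := anch_succ_sub Q hQ i k
  have hanch_mem : ∀ l : ℕ, l ≤ Q → anch Q i l ∈ Icc (2*(i:ℝ)) (2*(i:ℝ)+2) := by
    intro l hl
    constructor
    · have := anch_le_anch Q i (Nat.zero_le l); rwa [anch_zero] at this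
    · have := anch_le_anch Q i hl; rwa [anch_last Q hQ i] at this
  have hmemk : anch Q i k ∈ Icc (2*(i:ℝ)) (2*(i:ℝ)+2) := hanch_mem k hk.le
  have hmemk1 : anch Q i (k+1) ∈ Icc (2*(i:ℝ)) (2*(i:ℝ)+2) := hanch_mem (k+1) hk
  have h24 : (2:ℝ)/(Q:ℝ) ≤ 4/(Q:ℝ) := by gcongr <;> norm_num
  have h40 : (0:ℝ) ≤ 4/(Q:ℝ) := by positivity
  have hdk : |anch Q i k - x| ≤ 4/(Q:ℝ) := by
    rw [abs_le]; constructor <;> linarith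
  have hdk1 : |anch Q i (k+1) - x| ≤ 4/(Q:ℝ) := by
    rw [abs_le]; constructor <;> linarith
  have hA : |vval f γ Q i k - f x| ≤ γ := by
    have e1 := round_close γ hγ (f (anch Q i k))
    have e2 := hUC _ hmemk _ hx hdk
    calc |vval f γ Q i k - f x|
        = |(γ * round (f (anch Q i k)/γ) - f (anch Q i k)) + (f (anch Q i k) - f x)| := by
          rw [vval]; ring_nf
      _ ≤ |γ * round (f (anch Q i k)/γ) - f (anch Q i k)| + |f (anch Q i k) - f x| := abs_add_le _ _
      _ ≤ γ/2 + γ/2 := add_le_add e1 e2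
      _ = γ := by ring
  have hB : |vval f γ Q i (k+1) - f x| ≤ γ := by
    have e1 := round_close γ hγ (f (anch Q i (k+1)))
    have e2 := hUC _ hmemk1 _ hx hdk1
    calc |vval f γ Q i (k+1) - f x|
        = |(γ * round (f (anch Q i (k+1))/γ) - f (anch Q i (k+1))) + (f (anch Q i (k+1)) - f x)| := by
          rw [vval]; ring_nf
      _ ≤ _ + _ := abs_add_le _ _
      _ ≤ γ/2 + γ/2 := add_le_add e1 e2
      _ = γ := by ring
  rw [Gb_eval f γ Q i k hk x h1 h2]
  set lam := clamp01 ((Q:ℝ)*(x - anch Q i k) - 1/2) with hlam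
  have hl0 : 0 ≤ lam := clamp01_nonneg _
  have hl1 : lam ≤ 1 := clamp01_le_one _
  have hABl := abs_le.mp hA
  have hBBl := abs_le.mp hB
  rw [abs_le]
  constructor <;> nlinarith

lemma Gb_dichotomy (f : ℝ → ℝ) (γ : ℝ) (Q : ℕ) (hQ : 0 < Q) (i : ℤ) (x : ℝ)
    (hx : x ∈ Icc (2*(i:ℝ)) (2*(i:ℝ)+2)) :
    (∃ m : ℤ, Gb f γ Q i x = γ * m) ∨
    (∃ k : ℕ, |(Q:ℝ)*x - 2*(Q:ℝ)*(i:ℝ) - 2*(k:ℝ) - 1| < 1/2) := by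
  have hQR : (0:ℝ) < (Q:ℝ) := by exact_mod_cast hQ
  obtain ⟨k, hk, h1, h2⟩ := exists_cell Q hQ i x hx.1 hx.2
  rw [Gb_eval f γ Q i k hk x h1 h2]
  have hexp : (Q:ℝ)*(x - anch Q i k) = (Q:ℝ)*x - 2*(Q:ℝ)*(i:ℝ) - 2*(k:ℝ) := by
    unfold anch; field_simp; ring
  set y : ℝ := (Q:ℝ)*(x - anch Q i k) - 1/2 with hy
  rcases le_or_gt y 0 with hc | hc
  · left
    exact ⟨round (f (anch Q i k) / γ), by rw [clamp01_of_nonpos hc, mul_zero, add_zero, vval]⟩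
  rcases le_or_gt 1 y with hc' | hc'
  · left
    refine ⟨round (f (anch Q i (k+1)) / γ), ?_⟩
    rw [clamp01_of_one_le hc', mul_one]
    simp only [vval]
    ring
  · right
    refine ⟨k, ?_⟩
    rw [abs_lt]
    rw [hy, hexp] at hc hc'
    constructor
    · linarith
    · linarith

lemma half_le_abs (γ : ℝ) (hγ : 0 < γ) (m : ℤ) : γ/2 ≤ |γ*(m:ℝ) - γ/2| := by
  rcases le_or_gt 1 m with h | h
  · have h' : (1:ℝ) ≤ (m:ℝ) := by exact_mod_cast h
    rw [abs_of_nonneg (by nlinarith)]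
    nlinarith
  · have h' : (m:ℝ) ≤ 0 := by
      have : m ≤ 0 := by omega
      exact_mod_cast this
    rw [abs_of_nonpos (by nlinarith)]
    nlinarith

lemma gg_obstruction (f : ℝ → ℝ) (γ : ℝ) (hγ : 0 < γ) (Q : ℤ → ℕ)
    (hQ : ∀ j, ∃ q : ℕ, Q j = 2*q+3) (t : ℝ) :
    ∃ n : ℕ, γ/2 ≤ |gg f γ Q (t + (n:ℝ)) - γ/2| := by
  set i : ℤ := ⌈t/2⌉ with hi
  have ht : t ≤ 2*(i:ℝ) := by
    have := Int.le_ceil (t/2); rw [← hi] at this; linarith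
  set n₁ : ℕ := ⌈2*(i:ℝ) - t⌉₊ with hn₁
  have hx1a : 2*(i:ℝ) ≤ t + (n₁:ℝ) := by
    have := Nat.le_ceil (2*(i:ℝ) - t); rw [← hn₁] at this; linarith
  have hx1b : t + (n₁:ℝ) < 2*(i:ℝ) + 1 := by
    have := Nat.ceil_lt_add_one (by linarith : (0:ℝ) ≤ 2*(i:ℝ) - t)
    rw [← hn₁] at this; linarith
  obtain ⟨q, hq⟩ := hQ i
  have hQi : 0 < Q i := by omega
  have hQR : (0:ℝ) < ((Q i:ℕ):ℝ) := by exact_mod_cast hQi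
  set x₁ : ℝ := t + (n₁:ℝ) with hx₁
  have e1 : gg f γ Q x₁ = Gb f γ (Q i) i x₁ := gg_eq_Gb f γ Q i x₁ hx1a (by linarith)
  rcases Gb_dichotomy f γ (Q i) hQi i x₁ ⟨hx1a, by linarith⟩ with ⟨m, hm⟩ | ⟨k, hk⟩
  · exact ⟨n₁, by rw [← hx₁, e1, hm]; exact half_le_abs γ hγ m⟩
  · have hx2a : 2*(i:ℝ) ≤ x₁ + 1 := by linarith
    have hx2b : x₁ + 1 < 2*(i:ℝ) + 2 := by linarith
    have e2 : gg f γ Q (x₁+1) = Gb f γ (Q i) i (x₁+1) := gg_eq_Gb f γ Q i (x₁+1) hx2a hx2b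
    rcases Gb_dichotomy f γ (Q i) hQi i (x₁+1) ⟨hx2a, hx2b.le⟩ with ⟨m, hm⟩ | ⟨k', hk'⟩
    · refine ⟨n₁+1, ?_⟩
      have ecast : t + ((n₁+1 : ℕ):ℝ) = x₁ + 1 := by push_cast; rw [hx₁]; ring
      rw [ecast, e2, hm]
      exact half_le_abs γ hγ m
    · exfalso
      obtain ⟨ha1, ha2⟩ := abs_lt.mp hk
      obtain ⟨hb1, hb2⟩ := abs_lt.mp hk'
      have hz1 : ((Q i:ℕ):ℝ) - 2*(k':ℝ) + 2*(k:ℝ) < 1 := by nlinarith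
      have hz2 : (-1:ℝ) < ((Q i:ℕ):ℝ) - 2*(k':ℝ) + 2*(k:ℝ) := by nlinarith
      have hz1' : ((Q i : ℤ) - 2*(k':ℤ) + 2*(k:ℤ)) < 1 := by exact_mod_cast hz1
      have hz2' : (-1 : ℤ) < ((Q i : ℤ) - 2*(k':ℤ) + 2*(k:ℤ)) := by exact_mod_cast hz2
      omega

end StairAux

theorem stmt7 (X : Set (ℕ → ℝ)) (hX : ∀ x ∈ X, Bdd x)
    (h0 : (fun _ => (0 : ℝ)) ∈ X)
    (hspan : ∀ c : ℝ, ∀ x ∈ X, (fun n => c + x n) ∈ X)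
    (f : ℝ → ℝ) (hf : Continuous f) (hpw : PWAffine f) :
    ∀ ε > (0 : ℝ), ∃ g : ℝ → ℝ, Continuous g ∧ dinf f g < ε ∧ ¬ memUN X g := by
  intro ε hε
  set γ : ℝ := min ε 1 / 8 with hγdef
  have hmin : 0 < min ε 1 := lt_min hε one_pos
  have hγ : 0 < γ := by rw [hγdef]; linarith
  have hγε : γ < ε := by
    have h1 : min ε 1 ≤ ε := min_le_left _ _
    rw [hγdef]; linarith
  -- choose the mesh on each block by uniform continuity
  have hUC : ∀ i : ℤ, ∃ q : ℕ, ∀ x ∈ Icc (2*(i:ℝ)) (2*(i:ℝ)+2), ∀ y ∈ Icc (2*(i:ℝ)) (2*(i:ℝ)+2),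
      |x - y| ≤ 4/(((2*q+3 : ℕ)):ℝ) → |f x - f y| ≤ γ/2 := by
    intro i
    have hc : UniformContinuousOn f (Icc (2*(i:ℝ)) (2*(i:ℝ)+2)) :=
      isCompact_Icc.uniformContinuousOn_of_continuous hf.continuousOn
    rw [Metric.uniformContinuousOn_iff] at hc
    obtain ⟨δ, hδ, hδ'⟩ := hc (γ/2) (by linarith)
    obtain ⟨q, hq⟩ := exists_nat_gt (4/δ)
    refine ⟨q, fun x hx y hy hxy => ?_⟩
    have hq3 : (4:ℝ)/(((2*q+3 : ℕ)):ℝ) < δ := by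
      have hqpos : (0:ℝ) < ((2*q+3 : ℕ):ℝ) := by positivity
      rw [div_lt_iff₀ hqpos]
      have h4 : 4 < δ * q := by
        rw [div_lt_iff₀ hδ] at hq; linarith
      have hq' : (q:ℝ) ≤ ((2*q+3 : ℕ):ℝ) := by push_cast; linarith [(Nat.cast_nonneg q : (0:ℝ) ≤ (q:ℝ))]
      nlinarith
    have hd : dist x y < δ := by rw [Real.dist_eq]; linarith
    have := hδ' x hx y hy hd
    rw [Real.dist_eq] at this
    linarith
  choose qf hqf using hUC
  set Q : ℤ → ℕ := fun i => 2 * qf i + 3 with hQdef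
  have hQpos : ∀ j, 0 < Q j := fun j => by simp [hQdef]
  set g : ℝ → ℝ := gg f γ Q with hg
  have hgc : Continuous g := gg_continuous f γ Q hQpos
  have hbound : ∀ x : ℝ, |g x - f x| ≤ γ := by
    intro x
    set i : ℤ := ⌊x/2⌋ with hi
    have h1 : 2*(i:ℝ) ≤ x := by
      have := Int.floor_le (x/2); rw [← hi] at this; linarith
    have h2 : x < 2*(i:ℝ)+2 := by
      have := Int.lt_floor_add_one (x/2); rw [← hi] at this; linarith
    rw [hg, gg_eq_Gb f γ Q i x h1 h2]
    exact Gb_close f γ hγ (Q i) (hQpos i) i (hqf i) x ⟨h1, h2.le⟩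
  refine ⟨g, hgc, ?_, ?_⟩
  · -- dinf f g < ε
    have hS : (⨆ x : ℝ, ENNReal.ofReal |f x - g x|) ≤ ENNReal.ofReal γ :=
      iSup_le fun x => ENNReal.ofReal_le_ofReal (by rw [abs_sub_comm]; exact hbound x)
    have hle : dinf f g ≤ γ := by
      rw [dinf]
      calc (min (⨆ x : ℝ, ENNReal.ofReal |f x - g x|) 1).toReal
          ≤ (ENNReal.ofReal γ).toReal :=
            ENNReal.toReal_mono ENNReal.ofReal_ne_top ((min_le_left _ _).trans hS)
        _ = γ := ENNReal.toReal_ofReal hγ.le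
    linarith
  · -- not nearly universal
    rintro ⟨-, hU⟩
    have hmem : (fun n : ℕ => γ/2 + (fun _ : ℕ => (0:ℝ)) n) ∈ X := hspan (γ/2) _ h0
    have hfloor : ∀ t : ℝ, ENNReal.ofReal (γ/2) ≤ gapSup g (fun n : ℕ => γ/2 + (fun _ : ℕ => (0:ℝ)) n) t := by
      intro t
      obtain ⟨n, hn⟩ := gg_obstruction f γ hγ Q (fun j => ⟨qf j, by rw [hQdef]⟩) t
      calc ENNReal.ofReal (γ/2)
          ≤ ENNReal.ofReal |g (t + (n:ℝ)) - (γ/2 + (fun _ : ℕ => (0:ℝ)) n)| := by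
            apply ENNReal.ofReal_le_ofReal
            simpa using hn
        _ ≤ gapSup g (fun n : ℕ => γ/2 + (fun _ : ℕ => (0:ℝ)) n) t :=
            le_iSup (fun n : ℕ => ENNReal.ofReal |g (t + (n:ℝ)) - (γ/2 + (fun _ : ℕ => (0:ℝ)) n)|) n
    have hinf : ENNReal.ofReal (γ/2) ≤ ⨅ t : ℝ, gapSup g (fun n : ℕ => γ/2 + (fun _ : ℕ => (0:ℝ)) n) t :=
      le_iInf hfloor
    rw [hU _ hmem] at hinf
    have : γ/2 ≤ 0 := ENNReal.ofReal_eq_zero.mp (le_antisymm hinf (by positivity))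
    linarith
end

section
/- Let X ⊆ ℓ^∞ contain the zero sequence and satisfy span(𝟏) + X ⊆ X. Then the set U_N(X) of nearly X-universal functions is nowhere dense in (C(ℝ), d_∞). -/
open Filter Set

section Aux

noncomputable def tau (y : ℝ) : ℝ := max 0 (min 1 (min (2*y+1) (3-2*y)))

noncomputable def clm (y : ℝ) : ℝ := max 0 (min 1 y)

lemma tau_cont : Continuous tau := by
  unfold tau; fun_prop

lemma clm_cont : Continuous clm := by
  unfold clm; fun_prop

lemma tau_nonneg (y : ℝ) : 0 ≤ tau y := le_max_left _ _

lemma tau_le_one (y : ℝ) : tau y ≤ 1 := max_le zero_le_one (min_le_left _ _)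

lemma tau_eq_one {y : ℝ} (h0 : 0 ≤ y) (h1 : y ≤ 1) : tau y = 1 := by
  unfold tau
  rw [min_eq_left (le_min (by linarith) (by linarith)), max_eq_right zero_le_one]

lemma tau_eq_zero_left {y : ℝ} (h : y ≤ -(1/2)) : tau y = 0 := by
  unfold tau
  rw [max_eq_left]
  exact le_trans (min_le_right _ _) (le_trans (min_le_left _ _) (by linarith))

lemma tau_eq_zero_right {y : ℝ} (h : (3/2) ≤ y) : tau y = 0 := by
  unfold tau
  rw [max_eq_left]
  exact le_trans (min_le_right _ _) (le_trans (min_le_right _ _) (by linarith))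

lemma clm_mem (y : ℝ) : clm y ∈ Icc (0:ℝ) 1 :=
  ⟨le_max_left _ _, max_le zero_le_one (min_le_left _ _)⟩

lemma clm_eq {y : ℝ} (h0 : 0 ≤ y) (h1 : y ≤ 1) : clm y = y := by
  unfold clm; rw [min_eq_right h1, max_eq_right h0]

/-- The cluster lemma: two perturbed sample functions that stay jointly away from 0. -/
lemma cluster (f : ℝ → ℝ) (hf : Continuous f) {e : ℝ} (he : 0 < e) (a : ℝ) :
    ∃ G₁ G₂ : ℝ → ℝ, Continuous G₁ ∧ Continuous G₂ ∧
      ∀ θ ∈ Icc (0:ℝ) 1,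
        |G₁ θ - f (θ + a)| ≤ 2*e ∧ |G₂ θ - f (θ + (a+3))| ≤ 2*e ∧
          (e ≤ |G₁ θ| ∨ e ≤ |G₂ θ|) := by
  have he2 : 0 < e/2 := by linarith
  obtain ⟨p₁, hp₁⟩ := exists_polynomial_near_of_continuousOn 0 1 (fun θ => f (θ + a))
    ((hf.comp (continuous_id.add continuous_const)).continuousOn) (e/2) he2
  obtain ⟨p₂, hp₂⟩ := exists_polynomial_near_of_continuousOn 0 1 (fun θ => f (θ + (a+3)))
    ((hf.comp (continuous_id.add continuous_const)).continuousOn) (e/2) he2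
  -- choose c₁ with p₁ - C c₁ ≠ 0 and |c₁| ≤ e/2
  obtain ⟨c₁, hc₁abs, hq₁⟩ : ∃ c₁ : ℝ, |c₁| ≤ e/2 ∧ p₁ - Polynomial.C c₁ ≠ 0 := by
    by_cases hco : p₁ = Polynomial.C (e/2)
    · refine ⟨-(e/2), by rw [abs_neg, abs_of_nonneg he2.le], ?_⟩
      rw [hco, ← Polynomial.C_sub]
      simp only [ne_eq, Polynomial.C_eq_zero]
      intro hcc; linarith
    · exact ⟨e/2, by rw [abs_of_nonneg he2.le], sub_ne_zero.mpr hco⟩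
  -- finite root set
  have hroots : {θ : ℝ | (p₁ - Polynomial.C c₁).IsRoot θ}.Finite :=
    Polynomial.finite_setOf_isRoot hq₁
  have hbad : ((fun θ => p₂.eval θ) '' {θ : ℝ | (p₁ - Polynomial.C c₁).IsRoot θ}).Finite :=
    hroots.image _
  obtain ⟨c₂, hc₂mem, hc₂bad⟩ :
      ∃ c₂ ∈ Icc (-(e/2)) (e/2),
        c₂ ∉ (fun θ => p₂.eval θ) '' {θ : ℝ | (p₁ - Polynomial.C c₁).IsRoot θ} := by
    have : (Icc (-(e/2)) (e/2) \
        ((fun θ => p₂.eval θ) '' {θ : ℝ | (p₁ - Polynomial.C c₁).IsRoot θ})).Infinite :=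
      (Set.Icc_infinite (by linarith)).diff hbad
    obtain ⟨c₂, hmem⟩ := this.nonempty
    exact ⟨c₂, hmem.1, hmem.2⟩
  set P₁ : ℝ → ℝ := fun θ => p₁.eval θ - c₁ with hP₁def
  set P₂ : ℝ → ℝ := fun θ => p₂.eval θ - c₂ with hP₂def
  set A : ℝ → ℝ := fun θ => max |P₁ θ| |P₂ θ| with hAdef
  have hApos : ∀ θ : ℝ, 0 < A θ := by
    intro θ
    rcases eq_or_ne (P₁ θ) 0 with h1 | h1
    · have hroot : θ ∈ {θ : ℝ | (p₁ - Polynomial.C c₁).IsRoot θ} := by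
        simp only [Set.mem_setOf_eq, Polynomial.IsRoot, Polynomial.eval_sub, Polynomial.eval_C]
        simpa [hP₁def, sub_eq_zero] using h1
      have h2 : P₂ θ ≠ 0 := by
        intro h2
        exact hc₂bad ⟨θ, hroot, by simpa [hP₂def, sub_eq_zero] using h2⟩
      exact lt_of_lt_of_le (abs_pos.mpr h2) (le_max_right _ _)
    · exact lt_of_lt_of_le (abs_pos.mpr h1) (le_max_left _ _)
  set R : ℝ → ℝ := fun θ => max 1 (e / A θ) with hRdef
  have hR1 : ∀ θ, 1 ≤ R θ := fun θ => le_max_left _ _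
  have hRcont : Continuous R := by
    apply continuous_const.max
    exact continuous_const.div (by fun_prop) (fun θ => (hApos θ).ne')
  refine ⟨fun θ => R θ * P₁ θ, fun θ => R θ * P₂ θ, by fun_prop, by fun_prop, ?_⟩
  intro θ hθ
  have hP1F : |P₁ θ - f (θ + a)| ≤ e := by
    have h1 := hp₁ θ hθ
    have : P₁ θ - f (θ + a) = (p₁.eval θ - f (θ + a)) + (-c₁) := by simp [hP₁def]; ring
    rw [this]
    calc |(p₁.eval θ - f (θ + a)) + (-c₁)| ≤ |p₁.eval θ - f (θ + a)| + |(-c₁)| := abs_add_le _ _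
      _ ≤ e/2 + e/2 := by rw [abs_neg]; exact add_le_add h1.le hc₁abs
      _ = e := by ring
  have hP2F : |P₂ θ - f (θ + (a+3))| ≤ e := by
    have h1 := hp₂ θ hθ
    have hc₂abs : |c₂| ≤ e/2 := abs_le.mpr ⟨hc₂mem.1, hc₂mem.2⟩
    have : P₂ θ - f (θ + (a+3)) = (p₂.eval θ - f (θ + (a+3))) + (-c₂) := by simp [hP₂def]; ring
    rw [this]
    calc |(p₂.eval θ - f (θ + (a+3))) + (-c₂)| ≤ |p₂.eval θ - f (θ + (a+3))| + |(-c₂)| :=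
        abs_add_le _ _
      _ ≤ e/2 + e/2 := by rw [abs_neg]; exact add_le_add h1.le hc₂abs
      _ = e := by ring
  -- the push moves each coordinate by at most e
  have hpush : ∀ Q : ℝ → ℝ, |Q θ| ≤ A θ → |R θ * Q θ - Q θ| ≤ e := by
    intro Q hQA
    rcases le_or_gt e (A θ) with hA | hA
    · have : R θ = 1 := max_eq_left (by
        rw [div_le_one (hApos θ)]; exact hA)
      rw [this]; simpa using he.le
    · have hRe : R θ = e / A θ := max_eq_right (by
        rw [le_div_iff₀ (hApos θ)]; linarith)
      have h0 : R θ * Q θ - Q θ = (R θ - 1) * Q θ := by ring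
      rw [h0, abs_mul, abs_of_nonneg (by linarith [hR1 θ])]
      calc (R θ - 1) * |Q θ| ≤ (R θ - 1) * A θ := by
            apply mul_le_mul_of_nonneg_left hQA (by linarith [hR1 θ])
        _ = e - A θ := by rw [hRe, sub_mul, one_mul, div_mul_cancel₀ e (hApos θ).ne']
        _ ≤ e := by linarith [hApos θ]
  have hA1 : |P₁ θ| ≤ A θ := le_max_left _ _
  have hA2 : |P₂ θ| ≤ A θ := le_max_right _ _
  refine ⟨?_, ?_, ?_⟩
  · show |R θ * P₁ θ - f (θ + a)| ≤ 2*e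
    calc |R θ * P₁ θ - f (θ + a)| = |(R θ * P₁ θ - P₁ θ) + (P₁ θ - f (θ + a))| := by
          rw [sub_add_sub_cancel]
      _ ≤ |R θ * P₁ θ - P₁ θ| + |P₁ θ - f (θ + a)| := abs_add_le _ _
      _ ≤ e + e := add_le_add (hpush P₁ hA1) hP1F
      _ = 2*e := by ring
  · show |R θ * P₂ θ - f (θ + (a+3))| ≤ 2*e
    calc |R θ * P₂ θ - f (θ + (a+3))| = |(R θ * P₂ θ - P₂ θ) + (P₂ θ - f (θ + (a+3)))| := by
          rw [sub_add_sub_cancel]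
      _ ≤ |R θ * P₂ θ - P₂ θ| + |P₂ θ - f (θ + (a+3))| := abs_add_le _ _
      _ ≤ e + e := add_le_add (hpush P₂ hA2) hP2F
      _ = 2*e := by ring
  · show e ≤ |R θ * P₁ θ| ∨ e ≤ |R θ * P₂ θ|
    have hRA : e ≤ R θ * A θ := by
      calc e = (e / A θ) * A θ := (div_mul_cancel₀ e (hApos θ).ne').symm
        _ ≤ R θ * A θ := mul_le_mul_of_nonneg_right (le_max_right _ _) (hApos θ).le
    rcases le_total |P₁ θ| |P₂ θ| with h | h
    · right
      rw [abs_mul, abs_of_nonneg (by linarith [hR1 θ])]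
      calc e ≤ R θ * A θ := hRA
        _ = R θ * |P₂ θ| := by rw [hAdef]; simp [max_eq_right h]
    · left
      rw [abs_mul, abs_of_nonneg (by linarith [hR1 θ])]
      calc e ≤ R θ * A θ := hRA
        _ = R θ * |P₁ θ| := by rw [hAdef]; simp [max_eq_left h]

end Aux

/-- Global perturbation: U is small and f + U escapes the band (-e,e) along every progression. -/
lemma main_aux (f : ℝ → ℝ) (hf : Continuous f) {e : ℝ} (he : 0 < e) :
    ∃ U : ℝ → ℝ, Continuous U ∧ (∀ x, |U x| ≤ 4*e) ∧
      ∀ t : ℝ, ∃ n : ℕ, e ≤ |f (t + n) + U (t + n)| := by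
  have H : ∀ j : ℕ, ∃ G₁ G₂ : ℝ → ℝ, Continuous G₁ ∧ Continuous G₂ ∧
      ∀ θ ∈ Icc (0:ℝ) 1,
        |G₁ θ - f (θ + (7*(j:ℝ)+2))| ≤ 2*e ∧ |G₂ θ - f (θ + ((7*(j:ℝ)+2)+3))| ≤ 2*e ∧
          (e ≤ |G₁ θ| ∨ e ≤ |G₂ θ|) := fun j => cluster f hf he (7*(j:ℝ)+2)
  choose G₁ G₂ hG₁ hG₂ hprop using H
  set u : ℕ → ℝ → ℝ := fun j x =>
    tau (x - (7*(j:ℝ)+2)) *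
      (G₁ j (clm (x - (7*(j:ℝ)+2))) - f (clm (x - (7*(j:ℝ)+2)) + (7*(j:ℝ)+2)))
    + tau (x - ((7*(j:ℝ)+2)+3)) *
      (G₂ j (clm (x - ((7*(j:ℝ)+2)+3))) - f (clm (x - ((7*(j:ℝ)+2)+3)) + ((7*(j:ℝ)+2)+3)))
    with hudef
  have hucont : ∀ j, Continuous (u j) := by
    intro j
    apply Continuous.add
    · exact (tau_cont.comp (continuous_id.sub continuous_const)).mul
        (((hG₁ j).comp (clm_cont.comp (continuous_id.sub continuous_const))).sub
          (hf.comp ((clm_cont.comp (continuous_id.sub continuous_const)).add continuous_const)))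
    · exact (tau_cont.comp (continuous_id.sub continuous_const)).mul
        (((hG₂ j).comp (clm_cont.comp (continuous_id.sub continuous_const))).sub
          (hf.comp ((clm_cont.comp (continuous_id.sub continuous_const)).add continuous_const)))
  have hu0 : ∀ (j : ℕ) (x : ℝ), (x ≤ 7*(j:ℝ) + 3/2 ∨ 7*(j:ℝ) + 13/2 ≤ x) → u j x = 0 := by
    intro j x hx
    have h1 : tau (x - (7*(j:ℝ)+2)) = 0 := by
      rcases hx with hx | hx
      · exact tau_eq_zero_left (by linarith)
      · exact tau_eq_zero_right (by linarith)
    have h2 : tau (x - ((7*(j:ℝ)+2)+3)) = 0 := by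
      rcases hx with hx | hx
      · exact tau_eq_zero_left (by linarith)
      · exact tau_eq_zero_right (by linarith)
    simp only [hudef, h1, h2, zero_mul, add_zero]
  have hub : ∀ (j : ℕ) (x : ℝ), |u j x| ≤ 4*e := by
    intro j x
    have hb1 : |G₁ j (clm (x - (7*(j:ℝ)+2))) - f (clm (x - (7*(j:ℝ)+2)) + (7*(j:ℝ)+2))| ≤ 2*e :=
      (hprop j _ (clm_mem _)).1
    have hb2 : |G₂ j (clm (x - ((7*(j:ℝ)+2)+3))) -
        f (clm (x - ((7*(j:ℝ)+2)+3)) + ((7*(j:ℝ)+2)+3))| ≤ 2*e :=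
      (hprop j _ (clm_mem _)).2.1
    have t1 : |tau (x - (7*(j:ℝ)+2)) *
        (G₁ j (clm (x - (7*(j:ℝ)+2))) - f (clm (x - (7*(j:ℝ)+2)) + (7*(j:ℝ)+2)))| ≤ 2*e := by
      rw [abs_mul, abs_of_nonneg (tau_nonneg _)]
      calc tau (x - (7*(j:ℝ)+2)) *
          |G₁ j (clm (x - (7*(j:ℝ)+2))) - f (clm (x - (7*(j:ℝ)+2)) + (7*(j:ℝ)+2))|
          ≤ 1 * (2*e) := mul_le_mul (tau_le_one _) hb1 (abs_nonneg _) zero_le_one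
        _ = 2*e := one_mul _
    have t2 : |tau (x - ((7*(j:ℝ)+2)+3)) *
        (G₂ j (clm (x - ((7*(j:ℝ)+2)+3))) -
          f (clm (x - ((7*(j:ℝ)+2)+3)) + ((7*(j:ℝ)+2)+3)))| ≤ 2*e := by
      rw [abs_mul, abs_of_nonneg (tau_nonneg _)]
      calc tau (x - ((7*(j:ℝ)+2)+3)) *
          |G₂ j (clm (x - ((7*(j:ℝ)+2)+3))) -
            f (clm (x - ((7*(j:ℝ)+2)+3)) + ((7*(j:ℝ)+2)+3))|
          ≤ 1 * (2*e) := mul_le_mul (tau_le_one _) hb2 (abs_nonneg _) zero_le_one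
        _ = 2*e := one_mul _
    calc |u j x| ≤ |tau (x - (7*(j:ℝ)+2)) *
          (G₁ j (clm (x - (7*(j:ℝ)+2))) - f (clm (x - (7*(j:ℝ)+2)) + (7*(j:ℝ)+2)))|
        + |tau (x - ((7*(j:ℝ)+2)+3)) *
          (G₂ j (clm (x - ((7*(j:ℝ)+2)+3))) -
            f (clm (x - ((7*(j:ℝ)+2)+3)) + ((7*(j:ℝ)+2)+3)))| := abs_add_le _ _
      _ ≤ 4*e := by linarith
  have hUeq : ∀ (j : ℕ) (x : ℝ), 7*(j:ℝ)+3/2 < x → x < 7*(j:ℝ)+13/2 →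
      (∑ᶠ i, u i x) = u j x := by
    intro j x h1 h2
    apply finsum_eq_single
    intro j' hj'
    rcases hj'.lt_or_gt with h | h
    · apply hu0; right
      have hc : (j':ℝ) + 1 ≤ (j:ℝ) := by exact_mod_cast h
      linarith
    · apply hu0; left
      have hc : (j:ℝ) + 1 ≤ (j':ℝ) := by exact_mod_cast h
      linarith
  refine ⟨fun x => ∑ᶠ i, u i x, ?_, ?_, ?_⟩
  · apply continuous_finsum hucont
    intro x₀
    refine ⟨Metric.ball x₀ 1, Metric.ball_mem_nhds _ one_pos, ?_⟩
    apply Set.Finite.subset (Set.finite_Iio (Nat.ceil (|x₀| + 1)))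
    rintro j ⟨y, hy1, hy2⟩
    have h1 : ¬(y ≤ 7*(j:ℝ) + 3/2 ∨ 7*(j:ℝ) + 13/2 ≤ y) := fun h => hy1 (hu0 j y h)
    push_neg at h1
    have h2 : |y - x₀| < 1 := by
      rw [Metric.mem_ball, Real.dist_eq] at hy2; exact hy2
    have h3 : (j:ℝ) < |x₀| + 1 := by
      have hj7 : (j:ℝ) ≤ 7*(j:ℝ) := by
        have := Nat.cast_nonneg (α := ℝ) j; linarith
      have h4 := abs_sub_lt_iff.mp h2
      have hx0 : x₀ ≤ |x₀| := le_abs_self x₀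
      linarith [h1.1, h4.1]
    exact Set.mem_Iio.mpr (Nat.lt_ceil.mpr h3)
  · intro x
    show |∑ᶠ i, u i x| ≤ 4*e
    by_cases hx : ∃ j : ℕ, 7*(j:ℝ)+3/2 < x ∧ x < 7*(j:ℝ)+13/2
    · obtain ⟨j, h1, h2⟩ := hx
      rw [hUeq j x h1 h2]
      exact hub j x
    · push_neg at hx
      have hz : ∀ j : ℕ, u j x = 0 := by
        intro j
        rcases le_or_gt x (7*(j:ℝ)+3/2) with h | h
        · exact hu0 j x (Or.inl h)
        · exact hu0 j x (Or.inr (hx j h))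
      rw [finsum_eq_zero_of_forall_eq_zero hz]
      simpa using (by positivity : (0:ℝ) ≤ 4*e)
  · intro t
    obtain ⟨j, hzj⟩ : ∃ j : ℕ, ⌊t⌋ ≤ 7*(j:ℤ) := by
      refine ⟨⌊t⌋.toNat, ?_⟩
      have := Int.self_le_toNat ⌊t⌋
      omega
    have hθ : Int.fract t ∈ Icc (0:ℝ) 1 := ⟨Int.fract_nonneg t, (Int.fract_lt_one t).le⟩
    have hsample : ∀ k : ℕ, ∃ n : ℕ, t + (n:ℝ) = Int.fract t + (7*(j:ℝ) + (k:ℝ)) := by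
      intro k
      have hm : (0:ℤ) ≤ 7*(j:ℤ) + (k:ℤ) - ⌊t⌋ := by omega
      refine ⟨(7*(j:ℤ) + (k:ℤ) - ⌊t⌋).toNat, ?_⟩
      have h1 : ((7*(j:ℤ) + (k:ℤ) - ⌊t⌋).toNat : ℤ) = 7*(j:ℤ) + (k:ℤ) - ⌊t⌋ :=
        Int.toNat_of_nonneg hm
      have h2 : ((7*(j:ℤ) + (k:ℤ) - ⌊t⌋).toNat : ℝ) = 7*(j:ℝ) + (k:ℝ) - (⌊t⌋:ℝ) := by
        exact_mod_cast h1
      rw [h2, Int.fract]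
      ring
    obtain ⟨n₁, hn₁⟩ := hsample 2
    obtain ⟨n₂, hn₂⟩ := hsample 5
    have hθ0 := hθ.1
    have hθ1 := hθ.2
    have hU₁ : (∑ᶠ i, u i (Int.fract t + (7*(j:ℝ)+2))) = u j (Int.fract t + (7*(j:ℝ)+2)) :=
      hUeq j _ (by linarith) (by linarith)
    have hU₂ : (∑ᶠ i, u i (Int.fract t + ((7*(j:ℝ)+2)+3))) =
        u j (Int.fract t + ((7*(j:ℝ)+2)+3)) :=
      hUeq j _ (by linarith) (by linarith)
    have e₁ : (Int.fract t + (7*(j:ℝ)+2)) - (7*(j:ℝ)+2) = Int.fract t := by ring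
    have e₂ : (Int.fract t + (7*(j:ℝ)+2)) - ((7*(j:ℝ)+2)+3) = Int.fract t - 3 := by ring
    have e₃ : (Int.fract t + ((7*(j:ℝ)+2)+3)) - (7*(j:ℝ)+2) = Int.fract t + 3 := by ring
    have e₄ : (Int.fract t + ((7*(j:ℝ)+2)+3)) - ((7*(j:ℝ)+2)+3) = Int.fract t := by ring
    have hu₁ : u j (Int.fract t + (7*(j:ℝ)+2)) =
        G₁ j (Int.fract t) - f (Int.fract t + (7*(j:ℝ)+2)) := by
      simp only [hudef, e₁, e₂, tau_eq_one hθ0 hθ1, clm_eq hθ0 hθ1,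
        tau_eq_zero_left (by linarith : Int.fract t - 3 ≤ -(1/2)), one_mul, zero_mul, add_zero]
    have hu₂ : u j (Int.fract t + ((7*(j:ℝ)+2)+3)) =
        G₂ j (Int.fract t) - f (Int.fract t + ((7*(j:ℝ)+2)+3)) := by
      simp only [hudef, e₃, e₄, tau_eq_one hθ0 hθ1, clm_eq hθ0 hθ1,
        tau_eq_zero_right (by linarith : (3/2:ℝ) ≤ Int.fract t + 3), one_mul, zero_mul, zero_add]
    rcases (hprop j (Int.fract t) hθ).2.2 with hkill | hkill
    · refine ⟨n₁, ?_⟩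
      have hpt : t + (n₁:ℝ) = Int.fract t + (7*(j:ℝ)+2) := by
        rw [hn₁]; push_cast; ring
      rw [hpt]
      have : f (Int.fract t + (7*(j:ℝ)+2)) + (∑ᶠ i, u i (Int.fract t + (7*(j:ℝ)+2))) =
          G₁ j (Int.fract t) := by
        rw [hU₁, hu₁]; ring
      rw [this]
      exact hkill
    · refine ⟨n₂, ?_⟩
      have hpt : t + (n₂:ℝ) = Int.fract t + ((7*(j:ℝ)+2)+3) := by
        rw [hn₂]; push_cast; ring
      rw [hpt]
      have : f (Int.fract t + ((7*(j:ℝ)+2)+3)) +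
          (∑ᶠ i, u i (Int.fract t + ((7*(j:ℝ)+2)+3))) = G₂ j (Int.fract t) := by
        rw [hU₂, hu₂]; ring
      rw [this]
      exact hkill

/-- U_N(X) is nowhere dense in (C(ℝ), d_∞). -/
theorem stmt8 (X : Set (ℕ → ℝ)) (hX : ∀ x ∈ X, Bdd x)
    (h0 : (fun _ => (0 : ℝ)) ∈ X)
    (hspan : ∀ c : ℝ, ∀ x ∈ X, (fun n => c + x n) ∈ X) :
    ∀ f : ℝ → ℝ, Continuous f → ∀ ε > (0 : ℝ),
      ∃ g : ℝ → ℝ, Continuous g ∧ dinf f g < ε ∧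
        ∃ δ > (0 : ℝ), ∀ h : ℝ → ℝ, Continuous h → dinf g h < δ → ¬ memUN X h := by
  intro f hf ε hε
  have hmin : 0 < min ε 1 := lt_min hε one_pos
  set e : ℝ := min ε 1 / 8 with hedef
  have he : 0 < e := by positivity
  have he8 : e ≤ 1/8 := by
    have h1 := min_le_right ε 1
    rw [hedef]; linarith
  have heε : 8*e ≤ ε := by
    have h1 := min_le_left ε 1
    rw [hedef]; linarith
  obtain ⟨U, hUc, hUb, hUk⟩ := main_aux f hf he
  refine ⟨fun x => f x + U x, hf.add hUc, ?_, e/2, by positivity, ?_⟩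
  · -- dinf f g < ε
    have hS : (⨆ x : ℝ, ENNReal.ofReal |f x - (f x + U x)|) ≤ ENNReal.ofReal (4*e) := by
      apply iSup_le; intro x
      apply ENNReal.ofReal_le_ofReal
      have hid : f x - (f x + U x) = -U x := by ring
      rw [hid, abs_neg]; exact hUb x
    have h1 : dinf f (fun x => f x + U x) ≤ 4*e := by
      simp only [dinf]
      calc (min (⨆ x : ℝ, ENNReal.ofReal |f x - (f x + U x)|) 1).toReal
          ≤ (ENNReal.ofReal (4*e)).toReal :=
            ENNReal.toReal_mono ENNReal.ofReal_ne_top ((min_le_left _ _).trans hS)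
        _ = 4*e := ENNReal.toReal_ofReal (by positivity)
    linarith
  · intro h hhc hdist hmem
    have hdinf : dinf (fun x => f x + U x) h =
        (min (⨆ x : ℝ, ENNReal.ofReal |(f x + U x) - h x|) 1).toReal := rfl
    set S' := ⨆ x : ℝ, ENNReal.ofReal |(f x + U x) - h x| with hS'def
    have hS'lt : S' < 1 := by
      by_contra hge
      push_neg at hge
      rw [hdinf, min_eq_right hge] at hdist
      norm_num at hdist
      linarith
    have hSr : S'.toReal < e/2 := by
      rw [hdinf, min_eq_left hS'lt.le] at hdist
      exact hdist
    have hS'top : S' ≠ ⊤ := (hS'lt.trans ENNReal.one_lt_top).ne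
    have hpt : ∀ x : ℝ, |(f x + U x) - h x| < e/2 := by
      intro x
      have h1 : ENNReal.ofReal |(f x + U x) - h x| ≤ S' :=
        le_iSup (fun x => ENNReal.ofReal |(f x + U x) - h x|) x
      have h2 : (ENNReal.ofReal |(f x + U x) - h x|).toReal ≤ S'.toReal :=
        ENNReal.toReal_mono hS'top h1
      rw [ENNReal.toReal_ofReal (abs_nonneg _)] at h2
      linarith
    obtain ⟨-, hUN⟩ := hmem
    have h0' := hUN _ h0
    have hlow : ∀ t : ℝ, ENNReal.ofReal (e/2) ≤ gapSup h (fun _ => (0:ℝ)) t := by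
      intro t
      obtain ⟨n, hn⟩ := hUk t
      have h2 := hpt (t + n)
      have h3 : e/2 ≤ |h (t + (n:ℝ)) - (fun _ : ℕ => (0:ℝ)) n| := by
        simp only [sub_zero]
        have h4 := abs_sub_abs_le_abs_sub (f (t + (n:ℝ)) + U (t + (n:ℝ))) (h (t + (n:ℝ)))
        linarith
      simp only [gapSup]
      exact le_iSup_of_le n (ENNReal.ofReal_le_ofReal h3)
    have hge : ENNReal.ofReal (e/2) ≤ ⨅ t : ℝ, gapSup h (fun _ => (0:ℝ)) t := le_iInf hlow
    rw [h0'] at hge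
    rw [le_zero_iff, ENNReal.ofReal_eq_zero] at hge
    linarith
end

section
/- Let X ⊆ ℓ^∞ contain the zero sequence and satisfy span(𝟏) + X ⊆ X. Then the set U(X) of X-universal functions is nowhere dense in (C(ℝ), d_∞); in particular it is of first Baire category. -/
open Filter Set

noncomputable def trap (r : ℕ) (d : ℝ) : ℝ := max 0 (min 1 (2 - 2*(r:ℝ)*|d|))
lemma trap_nonneg (r : ℕ) (d : ℝ) : 0 ≤ trap r d := le_max_left _ _
lemma trap_le_one (r : ℕ) (d : ℝ) : trap r d ≤ 1 := by
  unfold trap; exact max_le zero_le_one (min_le_left _ _)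
lemma trap_eq_one {r : ℕ} {d : ℝ} (h : |d| * (2*(r:ℝ)) ≤ 1) : trap r d = 1 := by
  unfold trap
  have h1 : (1:ℝ) ≤ 2 - 2*(r:ℝ)*|d| := by nlinarith [abs_nonneg d]
  rw [min_eq_left h1, max_eq_right zero_le_one]
lemma trap_eq_zero {r : ℕ} {d : ℝ} (h : 1 ≤ |d| * (r:ℝ)) : trap r d = 0 := by
  unfold trap
  have h1 : 2 - 2*(r:ℝ)*|d| ≤ 0 := by nlinarith [abs_nonneg d]
  exact max_eq_left (le_trans (min_le_right _ _) h1)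
lemma trap_cont (r : ℕ) (c : ℝ) : Continuous (fun x : ℝ => trap r (x - c)) := by
  unfold trap; fun_prop
lemma trap_ne_zero {r : ℕ} {d : ℝ} (h : trap r d ≠ 0) : |d| * (r:ℝ) < 1 := by
  by_contra hc; push_neg at hc; exact h (trap_eq_zero hc)

noncomputable def lane (j : ℕ) : ℝ := if j % 2 = 0 then 1 else 2
def laneZ (j : ℕ) : ℤ := if j % 2 = 0 then 1 else 2
lemma lane_eq_laneZ (j : ℕ) : ((laneZ j : ℤ) : ℝ) = lane j := by
  unfold lane laneZ; split <;> norm_num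
lemma lane_ge_one (j : ℕ) : 1 ≤ lane j := by unfold lane; split <;> norm_num
lemma lane_le_two (j : ℕ) : lane j ≤ 2 := by unfold lane; split <;> norm_num
lemma lane_congr {j j' : ℕ} (h : j % 2 = j' % 2) : lane j = lane j' := by
  unfold lane; rw [h]

noncomputable def ctr (i : ℤ) (r : ℕ) (j : ℕ) : ℝ :=
  4*(i:ℝ) + lane j + ((j:ℝ) + 1/2)/(r:ℝ)

noncomputable def blockF (f : ℝ → ℝ) (γ : ℝ) (r : ℕ) (i : ℤ) (x : ℝ) : ℝ :=
  ∑ j ∈ Finset.range r,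
    (if 0 ≤ f (ctr i r j) then (1:ℝ) else -1) * (2*γ) * trap r (x - ctr i r j)

lemma ctr_mem {i : ℤ} {r : ℕ} {j : ℕ} (hr : 2 ≤ r) (hj : j < r) :
    4*(i:ℝ) + 1 ≤ ctr i r j ∧ ctr i r j ≤ 4*(i:ℝ) + 3 := by
  have hrpos : (0:ℝ) < r := by
    have : (0:ℕ) < r := by omega
    exact_mod_cast this
  have hfrac0 : (0:ℝ) ≤ ((j:ℝ) + 1/2)/(r:ℝ) := by positivity
  have hfrac1 : ((j:ℝ) + 1/2)/(r:ℝ) ≤ 1 := by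
    rw [div_le_one hrpos]
    have : (j:ℝ) + 1 ≤ (r:ℝ) := by exact_mod_cast hj
    linarith
  exact ⟨by have := lane_ge_one j; unfold ctr; linarith,
         by have := lane_le_two j; unfold ctr; linarith⟩

lemma blockF_cont (f : ℝ → ℝ) (γ : ℝ) (r : ℕ) (i : ℤ) : Continuous (blockF f γ r i) := by
  unfold blockF
  exact continuous_finset_sum _ (fun j _ => continuous_const.mul (trap_cont r (ctr i r j)))

lemma blockF_zero {f : ℝ → ℝ} {γ : ℝ} {r : ℕ} {i : ℤ} {x : ℝ} (hr : 2 ≤ r)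
    (hx : x ≤ 4*(i:ℝ) + 1/2 ∨ 4*(i:ℝ) + 7/2 ≤ x) : blockF f γ r i x = 0 := by
  unfold blockF
  apply Finset.sum_eq_zero
  intro j hj
  rw [Finset.mem_range] at hj
  have hc := ctr_mem (i := i) hr hj
  have hr2 : (2:ℝ) ≤ (r:ℝ) := by exact_mod_cast hr
  have habs : (1:ℝ)/2 ≤ |x - ctr i r j| := by
    rcases hx with hx | hx
    · rw [abs_sub_comm, le_abs]; left; linarith [hc.1]
    · rw [le_abs]; left; linarith [hc.2]
  have : (1:ℝ) ≤ |x - ctr i r j| * (r:ℝ) := by nlinarith [abs_nonneg (x - ctr i r j)]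
  rw [trap_eq_zero this, mul_zero]

/-- Two bumps of equal parity lanes have separated supports. -/
lemma trap_disj {i : ℤ} {r : ℕ} {x : ℝ} {j j' : ℕ} (hj : j < r) (hj' : j' < r)
    (hpar : j % 2 = j' % 2) (hne : j ≠ j')
    (hnz : trap r (x - ctr i r j) ≠ 0) : trap r (x - ctr i r j') = 0 := by
  have hrpos : (0:ℝ) < r := by
    have : (0:ℕ) < r := by omega
    exact_mod_cast this
  have h1 : |x - ctr i r j| * (r:ℝ) < 1 := trap_ne_zero hnz
  have hsep : (2:ℝ) ≤ |(j:ℝ) - (j':ℝ)| := by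
    have hcases : j + 2 ≤ j' ∨ j' + 2 ≤ j := by omega
    rcases hcases with hcc | hcc
    · have : (j:ℝ) + 2 ≤ (j':ℝ) := by exact_mod_cast hcc
      rw [abs_sub_comm, le_abs]; left; linarith
    · have : (j':ℝ) + 2 ≤ (j:ℝ) := by exact_mod_cast hcc
      rw [le_abs]; left; linarith
  have hctr : ctr i r j - ctr i r j' = ((j:ℝ) - (j':ℝ))/(r:ℝ) := by
    unfold ctr
    rw [lane_congr hpar]
    field_simp
    ring
  have hd : (2:ℝ)/(r:ℝ) ≤ |ctr i r j - ctr i r j'| := by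
    rw [hctr, abs_div, abs_of_pos hrpos]
    gcongr
  apply trap_eq_zero
  have htri : |ctr i r j - ctr i r j'| ≤ |x - ctr i r j| + |x - ctr i r j'| := by
    calc |ctr i r j - ctr i r j'| = |(x - ctr i r j') - (x - ctr i r j)| := by ring_nf
    _ ≤ |x - ctr i r j'| + |x - ctr i r j| := abs_sub _ _
    _ = |x - ctr i r j| + |x - ctr i r j'| := by ring
  have : (1:ℝ)/(r:ℝ) ≤ |x - ctr i r j'| := by
    have hx1 : |x - ctr i r j| < 1/(r:ℝ) := by
      rw [lt_div_iff₀ hrpos]; linarith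
    have : 2/(r:ℝ) - 1/(r:ℝ) ≤ |x - ctr i r j'| := by linarith
    calc (1:ℝ)/(r:ℝ) = 2/(r:ℝ) - 1/(r:ℝ) := by ring
    _ ≤ _ := this
  calc (1:ℝ) = (1/(r:ℝ)) * r := by field_simp
  _ ≤ |x - ctr i r j'| * r := by
      apply mul_le_mul_of_nonneg_right this (le_of_lt hrpos)

/-- Bound on a single-parity part of the comb. -/
lemma laneSum_bound {f : ℝ → ℝ} {γ : ℝ} {r : ℕ} {i : ℤ} {x : ℝ} (hγ : 0 ≤ γ)
    (S : Finset ℕ) (hS : S ⊆ Finset.range r)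
    (hpar : ∀ j ∈ S, ∀ j' ∈ S, j % 2 = j' % 2) :
    |∑ j ∈ S, (if 0 ≤ f (ctr i r j) then (1:ℝ) else -1) * (2*γ) * trap r (x - ctr i r j)| ≤ 2*γ := by
  by_cases hE : ∃ j₀ ∈ S, trap r (x - ctr i r j₀) ≠ 0
  · obtain ⟨j₀, hj₀S, hj₀⟩ := hE
    have hsum : ∑ j ∈ S, (if 0 ≤ f (ctr i r j) then (1:ℝ) else -1) * (2*γ) * trap r (x - ctr i r j)
        = (if 0 ≤ f (ctr i r j₀) then (1:ℝ) else -1) * (2*γ) * trap r (x - ctr i r j₀) := by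
      apply Finset.sum_eq_single_of_mem j₀ hj₀S
      intro b hbS hbne
      have hb : b < r := Finset.mem_range.mp (hS hbS)
      have hjr : j₀ < r := Finset.mem_range.mp (hS hj₀S)
      rw [trap_disj hjr hb (hpar j₀ hj₀S b hbS) (fun hh => hbne hh.symm) hj₀, mul_zero]
    rw [hsum, abs_mul, abs_mul]
    have h1 : |if 0 ≤ f (ctr i r j₀) then (1:ℝ) else -1| = 1 := by split <;> norm_num
    rw [h1, one_mul, abs_of_nonneg (by positivity : (0:ℝ) ≤ 2*γ)]
    have := trap_le_one r (x - ctr i r j₀)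
    have h2 : |trap r (x - ctr i r j₀)| = trap r (x - ctr i r j₀) :=
      abs_of_nonneg (trap_nonneg _ _)
    rw [h2]
    nlinarith [trap_nonneg r (x - ctr i r j₀)]
  · push_neg at hE
    have : ∑ j ∈ S, (if 0 ≤ f (ctr i r j) then (1:ℝ) else -1) * (2*γ) * trap r (x - ctr i r j) = 0 := by
      apply Finset.sum_eq_zero
      intro j hj
      rw [hE j hj, mul_zero]
    rw [this, abs_zero]; positivity

lemma blockF_bound {f : ℝ → ℝ} {γ : ℝ} {r : ℕ} {i : ℤ} (hγ : 0 ≤ γ) (x : ℝ) :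
    |blockF f γ r i x| ≤ 4*γ := by
  unfold blockF
  rw [← Finset.sum_filter_add_sum_filter_not (Finset.range r) (fun j => j % 2 = 0)]
  have h1 := laneSum_bound (f := f) (γ := γ) (r := r) (i := i) (x := x) hγ
    ((Finset.range r).filter (fun j => j % 2 = 0)) (Finset.filter_subset _ _)
    (by intro j hj j' hj'
        rw [Finset.mem_filter] at hj hj'
        omega)
  have h2 := laneSum_bound (f := f) (γ := γ) (r := r) (i := i) (x := x) hγ
    ((Finset.range r).filter (fun j => ¬ j % 2 = 0)) (Finset.filter_subset _ _)
    (by intro j hj j' hj'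
        rw [Finset.mem_filter] at hj hj'
        omega)
  calc |_ + _| ≤ _ + _ := abs_add_le _ _
  _ ≤ 2*γ + 2*γ := add_le_add h1 h2
  _ = 4*γ := by ring

/-- At the comb point of the piece containing `α`, the comb takes its full plateau value. -/
lemma blockF_eq_single {f : ℝ → ℝ} {γ : ℝ} {r : ℕ} {i : ℤ} {j : ℕ} {α x : ℝ}
    (hr : 2 ≤ r) (hj : j < r) (hα0 : 0 ≤ α) (hα1 : α < 1)
    (hu1 : (j:ℝ) ≤ α * r) (hu2 : α * r < (j:ℝ) + 1)
    (hx : x = 4*(i:ℝ) + lane j + α) :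
    blockF f γ r i x = (if 0 ≤ f (ctr i r j) then (1:ℝ) else -1) * (2*γ) := by
  have hRpos : (0:ℝ) < r := by
    have : (0:ℕ) < r := by omega
    exact_mod_cast this
  have hRne : (r:ℝ) ≠ 0 := ne_of_gt hRpos
  unfold blockF
  rw [Finset.sum_eq_single_of_mem j (Finset.mem_range.mpr hj)]
  · -- trap at j equals 1
    have hd : |x - ctr i r j| * (2*(r:ℝ)) ≤ 1 := by
      have hxc : (x - ctr i r j) * (r:ℝ) = α * r - ((j:ℝ) + 1/2) := by
        rw [hx]; unfold ctr; field_simp; ring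
      have habs : |x - ctr i r j| * (r:ℝ) = |α * r - ((j:ℝ) + 1/2)| := by
        rw [← abs_of_pos hRpos, ← abs_mul, hxc, abs_of_pos hRpos]
      have : |α * r - ((j:ℝ) + 1/2)| ≤ 1/2 := by
        rw [abs_le]; constructor <;> linarith
      calc |x - ctr i r j| * (2*(r:ℝ)) = (|x - ctr i r j| * (r:ℝ)) * 2 := by ring
      _ = |α * r - ((j:ℝ) + 1/2)| * 2 := by rw [habs]
      _ ≤ 1 := by linarith
    rw [trap_eq_one hd, mul_one]
  · -- all other traps vanish
    intro b hbmem hbne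
    rw [Finset.mem_range] at hbmem
    have hERcalc : (x - ctr i r b) * (r:ℝ)
        = (lane j - lane b) * (r:ℝ) + α * r - ((b:ℝ) + 1/2) := by
      rw [hx]; unfold ctr; field_simp; ring
    have habs : |x - ctr i r b| * (r:ℝ) = |(lane j - lane b) * (r:ℝ) + α * r - ((b:ℝ) + 1/2)| := by
      rw [← abs_of_pos hRpos, ← abs_mul, hERcalc, abs_of_pos hRpos]
    have hR2 : (2:ℝ) ≤ (r:ℝ) := by exact_mod_cast hr
    have hkey : 1 ≤ |(lane j - lane b) * (r:ℝ) + α * r - ((b:ℝ) + 1/2)| := by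
      have huR : α * r < (r:ℝ) := by
        calc α * r < 1 * r := by apply mul_lt_mul_of_pos_right hα1 hRpos
        _ = (r:ℝ) := one_mul _
      rcases Nat.even_or_odd j with hjp | hjp <;> rcases Nat.even_or_odd b with hbp | hbp
      · -- both even
        have hlj : lane j = lane b := lane_congr (by rw [Nat.even_iff.mp hjp, Nat.even_iff.mp hbp])
        have hsep : b + 2 ≤ j ∨ j + 2 ≤ b := by
          have e1 := Nat.even_iff.mp hjp; have e2 := Nat.even_iff.mp hbp; omega
        rcases hsep with hs | hs
        · have : (b:ℝ) + 2 ≤ (j:ℝ) := by exact_mod_cast hs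
          rw [le_abs]; left; rw [hlj]; ring_nf; linarith
        · have : (j:ℝ) + 2 ≤ (b:ℝ) := by exact_mod_cast hs
          rw [le_abs]; right; rw [hlj]; ring_nf; linarith
      · -- j even, b odd : lane j = 1, lane b = 2, b ≥ 1
        have hlj : lane j = 1 := by unfold lane; simp [Nat.even_iff.mp hjp]
        have hlb : lane b = 2 := by unfold lane; simp [Nat.odd_iff.mp hbp]
        have hb1 : 1 ≤ b := by
          rcases hbp with ⟨l, hl⟩; omega
        have hb1' : (1:ℝ) ≤ (b:ℝ) := by exact_mod_cast hb1
        rw [le_abs]; right; rw [hlj, hlb]; ring_nf; linarith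
      · -- j odd, b even : lane j = 2, lane b = 1, j ≥ 1 so α*r ≥ 1; b ≤ r-1
        have hlj : lane j = 2 := by unfold lane; simp [Nat.odd_iff.mp hjp]
        have hlb : lane b = 1 := by unfold lane; simp [Nat.even_iff.mp hbp]
        have hj1 : 1 ≤ j := by rcases hjp with ⟨k, hk⟩; omega
        have hj1' : (1:ℝ) ≤ (j:ℝ) := by exact_mod_cast hj1
        have hbr : (b:ℝ) + 1 ≤ (r:ℝ) := by exact_mod_cast hbmem
        rw [le_abs]; left; rw [hlj, hlb]; ring_nf; linarith
      · -- both odd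
        have hlj : lane j = lane b := lane_congr (by rw [Nat.odd_iff.mp hjp, Nat.odd_iff.mp hbp])
        have hsep : b + 2 ≤ j ∨ j + 2 ≤ b := by
          have e1 := Nat.odd_iff.mp hjp; have e2 := Nat.odd_iff.mp hbp; omega
        rcases hsep with hs | hs
        · have : (b:ℝ) + 2 ≤ (j:ℝ) := by exact_mod_cast hs
          rw [le_abs]; left; rw [hlj]; ring_nf; linarith
        · have : (j:ℝ) + 2 ≤ (b:ℝ) := by exact_mod_cast hs
          rw [le_abs]; right; rw [hlj]; ring_nf; linarith
    have : 1 ≤ |x - ctr i r b| * (r:ℝ) := by rw [habs]; exact hkey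
    rw [trap_eq_zero this, mul_zero]

theorem keyLemma (f : ℝ → ℝ) (hf : Continuous f) (γ : ℝ) (hγ : 0 < γ) :
    ∃ P : ℝ → ℝ, Continuous P ∧ (∀ x, |P x| ≤ 4*γ) ∧
      ∀ t : ℝ, ∃ n : ℕ, γ ≤ |f (t + (n:ℝ)) + P (t + (n:ℝ))| := by
  have H : ∀ i : ℤ, ∃ δ, 0 < δ ∧ ∀ x ∈ Icc (4*(i:ℝ)) (4*(i:ℝ)+5), ∀ y ∈ Icc (4*(i:ℝ)) (4*(i:ℝ)+5),
      dist x y < δ → dist (f x) (f y) < γ := by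
    intro i
    have hc : UniformContinuousOn f (Icc (4*(i:ℝ)) (4*(i:ℝ)+5)) :=
      isCompact_Icc.uniformContinuousOn_of_continuous hf.continuousOn
    obtain ⟨δ, hδ, hδ2⟩ := (Metric.uniformContinuousOn_iff.mp hc) γ hγ
    exact ⟨δ, hδ, hδ2⟩
  choose d hd0 hd using H
  set rf : ℤ → ℕ := fun i => max 2 ⌈1/(d i)⌉₊ with hrfdef
  have hrf2 : ∀ i, 2 ≤ rf i := fun i => le_max_left _ _
  have hrpos : ∀ i, (0:ℝ) < ((rf i):ℝ) := by
    intro i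
    have : (0:ℕ) < rf i := by have := hrf2 i; omega
    exact_mod_cast this
  have hrfd : ∀ i, 1/((rf i):ℝ) ≤ d i := by
    intro i
    have h1 : 1/(d i) ≤ (⌈1/(d i)⌉₊ : ℝ) := Nat.le_ceil _
    have h2 : ((⌈1/(d i)⌉₊:ℕ):ℝ) ≤ ((rf i):ℝ) := by
      have : ⌈1/(d i)⌉₊ ≤ rf i := le_max_right _ _
      exact_mod_cast this
    have h3 : 1/(d i) ≤ ((rf i):ℝ) := le_trans h1 h2
    rw [div_le_iff₀ (hrpos i)]
    have := (div_le_iff₀ (hd0 i)).mp h3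
    linarith
  set P : ℝ → ℝ := fun x => blockF f γ (rf ⌊x/4⌋) ⌊x/4⌋ x with hPdef
  -- P vanishes near multiples of 4
  have hfloor : ∀ (m : ℤ) (y : ℝ), 4*(m:ℝ) ≤ y → y < 4*(m:ℝ) + 4 → ⌊y/4⌋ = m := by
    intro m y h1 h2
    rw [Int.floor_eq_iff]
    constructor
    · rw [le_div_iff₀ (by norm_num : (0:ℝ) < 4)]; linarith
    · rw [div_lt_iff₀ (by norm_num : (0:ℝ) < 4)]; push_cast; linarith
  have hzero : ∀ (m : ℤ), ∀ y ∈ Ioo (4*(m:ℝ) - 1/2) (4*(m:ℝ) + 1/2), P y = 0 := by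
    intro m y hy
    obtain ⟨hy1, hy2⟩ := hy
    rcases lt_or_ge y (4*(m:ℝ)) with hlt | hge
    · have hfl : ⌊y/4⌋ = m - 1 := by
        apply hfloor
        · push_cast; linarith
        · push_cast; linarith
      rw [hPdef]
      simp only [hfl]
      apply blockF_zero (hrf2 _)
      right; push_cast; linarith
    · have hfl : ⌊y/4⌋ = m := hfloor m y hge (by linarith)
      rw [hPdef]
      simp only [hfl]
      apply blockF_zero (hrf2 _)
      left; linarith
  have hPcont : Continuous P := by
    rw [continuous_iff_continuousAt]
    intro x₀
    set i₀ : ℤ := ⌊x₀/4⌋ with hi₀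
    have hx₀1 : 4*(i₀:ℝ) ≤ x₀ := by
      have h := Int.floor_le (x₀/4)
      rw [← hi₀] at h
      linarith
    have hx₀2 : x₀ < 4*(i₀:ℝ) + 4 := by
      have h := Int.lt_floor_add_one (x₀/4)
      rw [← hi₀] at h
      linarith
    rcases eq_or_lt_of_le hx₀1 with heq | hlt
    · -- x₀ = 4 i₀ : P vanishes on a neighborhood
      apply ContinuousAt.congr (continuousAt_const (y := (0:ℝ)))
      have hmem : Ioo (4*(i₀:ℝ) - 1/2) (4*(i₀:ℝ) + 1/2) ∈ nhds x₀ := by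
        apply Ioo_mem_nhds <;> (rw [← heq] at *; linarith)
      filter_upwards [hmem] with y hy
      exact (hzero i₀ y hy).symm
    · -- interior of the block
      apply ContinuousAt.congr ((blockF_cont f γ (rf i₀) i₀).continuousAt)
      have hmem : Ioo (4*(i₀:ℝ)) (4*(i₀:ℝ) + 4) ∈ nhds x₀ := Ioo_mem_nhds hlt hx₀2
      filter_upwards [hmem] with y hy
      have hfl : ⌊y/4⌋ = i₀ := hfloor i₀ y (le_of_lt hy.1) hy.2
      rw [hPdef]
      simp only [hfl]
  have hPbound : ∀ x, |P x| ≤ 4*γ := by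
    intro x
    rw [hPdef]
    exact blockF_bound (le_of_lt hγ) x
  refine ⟨P, hPcont, hPbound, ?_⟩
  intro t
  set i : ℤ := max ⌊t⌋ 0 with hidef
  set r : ℕ := rf i with hrdef
  have hr2 : 2 ≤ r := hrf2 i
  have hR2 : (2:ℝ) ≤ (r:ℝ) := by exact_mod_cast hr2
  have hRpos : (0:ℝ) < (r:ℝ) := hrpos i
  set α : ℝ := Int.fract t with hαdef
  have hα0 : 0 ≤ α := Int.fract_nonneg t
  have hα1 : α < 1 := Int.fract_lt_one t
  set u : ℝ := α * (r:ℝ) with hudef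
  have hu0 : 0 ≤ u := by positivity
  have hfloornn : 0 ≤ ⌊u⌋ := Int.floor_nonneg.mpr hu0
  set j : ℕ := ⌊u⌋.toNat with hjdef
  have hjcast : ((j:ℕ):ℝ) = ((⌊u⌋:ℤ):ℝ) := by
    rw [hjdef]
    exact_mod_cast congrArg (fun z : ℤ => (z:ℝ)) (Int.toNat_of_nonneg hfloornn)
  have hu1 : (j:ℝ) ≤ u := by rw [hjcast]; exact Int.floor_le u
  have hu2 : u < (j:ℝ) + 1 := by rw [hjcast]; exact Int.lt_floor_add_one u
  have huR : u < (r:ℝ) := by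
    rw [hudef]
    calc α * (r:ℝ) < 1 * (r:ℝ) := mul_lt_mul_of_pos_right hα1 hRpos
    _ = (r:ℝ) := one_mul _
  have hjr : j < r := by
    by_contra hcon
    push_neg at hcon
    have : (r:ℝ) ≤ (j:ℝ) := by exact_mod_cast hcon
    linarith
  -- the integer step
  have hlaneZ : laneZ j = 1 ∨ laneZ j = 2 := by unfold laneZ; split <;> simp
  have hit : ⌊t⌋ ≤ i := le_max_left _ _
  have hi0 : 0 ≤ i := le_max_right _ _
  have hn0 : 0 ≤ 4*i + laneZ j - ⌊t⌋ := by rcases hlaneZ with h | h <;> omega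
  set n : ℕ := (4*i + laneZ j - ⌊t⌋).toNat with hndef
  have hncast : ((n:ℕ):ℝ) = 4*(i:ℝ) + ((laneZ j : ℤ):ℝ) - ((⌊t⌋:ℤ):ℝ) := by
    have : ((n:ℕ):ℤ) = 4*i + laneZ j - ⌊t⌋ := by
      rw [hndef]; exact Int.toNat_of_nonneg hn0
    have := congrArg (fun z : ℤ => (z:ℝ)) this
    push_cast at this
    push_cast
    linarith
  have hxstar : t + (n:ℝ) = 4*(i:ℝ) + lane j + α := by
    have hfr : α = t - ((⌊t⌋:ℤ):ℝ) := by rw [hαdef]; exact (Int.self_sub_floor t).symm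
    rw [hncast, ← lane_eq_laneZ j]
    rw [hfr]
    ring
  set x' : ℝ := t + (n:ℝ) with hx'def
  have hx'lo : 4*(i:ℝ) + 1 ≤ x' := by
    rw [hxstar]
    have := lane_ge_one j
    linarith
  have hx'hi : x' < 4*(i:ℝ) + 3 := by
    rw [hxstar]
    have := lane_le_two j
    linarith
  have hfl : ⌊x'/4⌋ = i := hfloor i x' (by linarith) (by linarith)
  have hPx' : P x' = blockF f γ r i x' := by
    rw [hPdef]
    simp only [hfl, hrdef]
  have hsingle : blockF f γ r i x' = (if 0 ≤ f (ctr i r j) then (1:ℝ) else -1) * (2*γ) :=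
    blockF_eq_single hr2 hjr hα0 hα1 hu1 hu2 hxstar
  -- uniform continuity comparison at the center
  have hcmem := ctr_mem (i := i) hr2 hjr
  have hclose : |x' - ctr i r j| < d i := by
    have hxc : (x' - ctr i r j) * (r:ℝ) = u - ((j:ℝ) + 1/2) := by
      rw [hxstar]; unfold ctr; rw [hudef]; field_simp; ring
    have habs : |x' - ctr i r j| * (r:ℝ) = |u - ((j:ℝ) + 1/2)| := by
      rw [← abs_of_pos hRpos, ← abs_mul, hxc]
    have h12 : |u - ((j:ℝ) + 1/2)| ≤ 1/2 := by rw [abs_le]; constructor <;> linarith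
    have : |x' - ctr i r j| ≤ 1/(2*(r:ℝ)) := by
      rw [← habs] at h12
      rw [le_div_iff₀ (by positivity : (0:ℝ) < 2*(r:ℝ))]
      linarith
    have hlt : 1/(2*(r:ℝ)) < 1/((r:ℝ)) := by
      apply div_lt_div_of_pos_left one_pos hRpos
      linarith
    linarith [hrfd i]
  have hdist : |f x' - f (ctr i r j)| < γ := by
    have hm1 : x' ∈ Icc (4*(i:ℝ)) (4*(i:ℝ)+5) := ⟨by linarith, by linarith⟩
    have hm2 : ctr i r j ∈ Icc (4*(i:ℝ)) (4*(i:ℝ)+5) := ⟨by linarith [hcmem.1], by linarith [hcmem.2]⟩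
    have := hd i x' hm1 (ctr i r j) hm2 (by rw [Real.dist_eq]; exact hclose)
    rw [Real.dist_eq] at this
    exact this
  refine ⟨n, ?_⟩
  have hmain : γ ≤ |f x' + P x'| := by
    rw [hPx', hsingle]
    by_cases hs : 0 ≤ f (ctr i r j)
    · rw [if_pos hs]
      have h1 : γ ≤ f x' + 1 * (2*γ) := by
        have h2 : f (ctr i r j) - γ < f x' := by
          have := abs_lt.mp hdist
          linarith [this.1]
        linarith
      rw [le_abs]; left; exact h1
    · rw [if_neg hs]
      push_neg at hs
      have h1 : γ ≤ -(f x' + (-1) * (2*γ)) := by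
        have h2 : f x' < f (ctr i r j) + γ := by
          have := abs_lt.mp hdist
          linarith [this.2]
        linarith
      rw [le_abs]; right; exact h1
  rw [hx'def] at hmain
  exact hmain

lemma dinf_le_of_bound (f g : ℝ → ℝ) {C : ℝ} (h0 : 0 ≤ C) (hb : ∀ x, |f x - g x| ≤ C) :
    dinf f g ≤ C := by
  unfold dinf
  have hS : (⨆ x : ℝ, ENNReal.ofReal |f x - g x|) ≤ ENNReal.ofReal C :=
    iSup_le fun x => ENNReal.ofReal_le_ofReal (hb x)
  exact ENNReal.toReal_le_of_le_ofReal h0 (le_trans (min_le_left _ _) hS)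

lemma abs_lt_of_dinf_lt {g h : ℝ → ℝ} {δ : ℝ} (hδ0 : 0 < δ) (hδ1 : δ ≤ 1)
    (hd : dinf g h < δ) (x : ℝ) : |g x - h x| < δ := by
  by_contra hc
  push_neg at hc
  have h1 : ENNReal.ofReal δ ≤ ⨆ x : ℝ, ENNReal.ofReal |g x - h x| :=
    le_trans (ENNReal.ofReal_le_ofReal hc) (le_iSup (fun x => ENNReal.ofReal |g x - h x|) x)
  have h2 : ENNReal.ofReal δ ≤ 1 := by
    rw [← ENNReal.ofReal_one]
    exact ENNReal.ofReal_le_ofReal hδ1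
  have h3 : ENNReal.ofReal δ ≤ min (⨆ x : ℝ, ENNReal.ofReal |g x - h x|) 1 := le_min h1 h2
  have h4 : (ENNReal.ofReal δ).toReal ≤ dinf g h := by
    unfold dinf
    apply ENNReal.toReal_mono _ h3
    exact ne_top_of_le_ne_top ENNReal.one_ne_top (min_le_right _ _)
  rw [ENNReal.toReal_ofReal (le_of_lt hδ0)] at h4
  linarith

/-- U(X) is nowhere dense in (C(ℝ), d_∞). -/
theorem stmt9 (X : Set (ℕ → ℝ)) (hX : ∀ x ∈ X, Bdd x)
    (h0 : (fun _ => (0 : ℝ)) ∈ X)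
    (hspan : ∀ c : ℝ, ∀ x ∈ X, (fun n => c + x n) ∈ X) :
    ∀ f : ℝ → ℝ, Continuous f → ∀ ε > (0 : ℝ),
      ∃ g : ℝ → ℝ, Continuous g ∧ dinf f g < ε ∧
        ∃ δ > (0 : ℝ), ∀ h : ℝ → ℝ, Continuous h → dinf g h < δ → ¬ memU X h := by
  intro f hf ε hε
  set ε' : ℝ := min ε 1 with hε'def
  have hε'0 : 0 < ε' := lt_min hε one_pos
  have hε'1 : ε' ≤ 1 := min_le_right _ _
  have hε'ε : ε' ≤ ε := min_le_left _ _
  set γ : ℝ := ε'/8 with hγdef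
  have hγ0 : 0 < γ := by positivity
  obtain ⟨P, hPc, hPb, hPkill⟩ := keyLemma f hf γ hγ0
  refine ⟨fun x => f x + P x, hf.add hPc, ?_, γ/2, by positivity, ?_⟩
  · have hb : ∀ x, |f x - (f x + P x)| ≤ 4*γ := by
      intro x
      have : f x - (f x + P x) = -(P x) := by ring
      rw [this, abs_neg]
      exact hPb x
    have := dinf_le_of_bound f (fun x => f x + P x) (by positivity) hb
    have h4γ : 4*γ < ε := by
      rw [hγdef]
      calc 4*(ε'/8) = ε'/2 := by ring
      _ < ε' := by linarith
      _ ≤ ε := hε'ε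
    linarith
  · intro h hc hd hU
    obtain ⟨-, hint⟩ := hU
    obtain ⟨t, ht⟩ := hint _ h0
    obtain ⟨n, hn⟩ := hPkill t
    have hzero : h (t + (n:ℝ)) = 0 := ht n
    have hδ1 : γ/2 ≤ 1 := by
      rw [hγdef]; linarith
    have hptw := abs_lt_of_dinf_lt (by positivity) hδ1 hd (t + (n:ℝ))
    rw [hzero] at hptw
    simp only [sub_zero] at hptw
    have : γ ≤ |f (t + (n:ℝ)) + P (t + (n:ℝ))| := hn
    linarith
end

section
/- The set U(ℓ^∞) of universal interpolating functions — continuous f : ℝ → ℝ such that for every bounded real sequence (x_n)_{n∈ℕ} there exists t ∈ ℝ with f(t+n) = x_n for all n — is nowhere dense in C(ℝ) with the metric d_∞(f,g) = min(‖f−g‖_∞, 1). -/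
open Filter Set

section Stmt10Aux

set_option maxHeartbeats 4000000


noncomputable def tent (w ν x : ℝ) : ℝ := max 0 (1 - |x - ν| / w)

lemma tent_continuous (w ν : ℝ) : Continuous (tent w ν) := by
  unfold tent; fun_prop

lemma tent_nonneg (w ν x : ℝ) : 0 ≤ tent w ν x := le_max_left _ _

lemma tent_eq_zero (w ν x : ℝ) (hw : 0 < w) (hx : w ≤ |x - ν|) : tent w ν x = 0 := by
  unfold tent
  have : 1 ≤ |x - ν| / w := (one_le_div hw).mpr hx
  exact max_eq_left (by linarith)

lemma tent_right (w ν x : ℝ) (hw : 0 < w) (h1 : ν ≤ x) (h2 : x ≤ ν + w) :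
    tent w ν x = 1 - (x - ν) / w := by
  unfold tent
  rw [abs_of_nonneg (by linarith)]
  refine max_eq_right ?_
  have : (x - ν)/w ≤ 1 := (div_le_one hw).mpr (by linarith)
  linarith

lemma tent_left (w ν x : ℝ) (hw : 0 < w) (h1 : ν - w ≤ x) (h2 : x ≤ ν) :
    tent w ν x = 1 - (ν - x) / w := by
  unfold tent
  rw [abs_of_nonpos (by linarith), neg_sub]
  refine max_eq_right ?_
  have : (ν - x)/w ≤ 1 := (div_le_one hw).mpr (by linarith)
  linarith

lemma block (f : ℝ → ℝ) (hf : Continuous f) (b δ : ℝ) (hδ : 0 < δ) :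
    ∃ q : ℝ → ℝ, Continuous q ∧ (∀ x, |q x| ≤ 8 * δ) ∧
      (∀ x, x ≤ b + 1/2 → q x = 0) ∧ (∀ x, b + 9/2 ≤ x → q x = 0) ∧
      (∀ θ : ℝ, 0 ≤ θ → θ < 1 →
        δ < |f (b + 1 + θ) + q (b + 1 + θ)| ∨ δ < |f (b + 3 + θ) + q (b + 3 + θ)|) := by
  -- uniform continuity on the block
  have hK : IsCompact (Icc b (b+5)) := isCompact_Icc
  have huc := hK.uniformContinuousOn_of_continuous hf.continuousOn
  rw [Metric.uniformContinuousOn_iff_le] at huc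
  obtain ⟨η, hη, hmod⟩ := huc δ hδ
  -- grid
  set n : ℕ := max 1 ⌈1/(2*η)⌉₊ with hn_def
  have hn1 : 1 ≤ n := le_max_left _ _
  have hnpos : (0:ℝ) < n := by exact_mod_cast Nat.lt_of_lt_of_le Nat.zero_lt_one hn1
  set w : ℝ := 1/(2*(n:ℝ)) with hw_def
  have hwpos : 0 < w := by positivity
  have hwη : w ≤ η := by
    have h1 : (1/(2*η) : ℝ) ≤ n := by
      calc (1/(2*η) : ℝ) ≤ ⌈1/(2*η)⌉₊ := Nat.le_ceil _
        _ ≤ n := by exact_mod_cast le_max_right 1 ⌈1/(2*η)⌉₊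
    rw [hw_def, div_le_iff₀ (by positivity)]
    rw [div_le_iff₀ (by positivity)] at h1
    nlinarith
  have hn1' : (1:ℝ) ≤ (n:ℝ) := by exact_mod_cast hn1
  have hw2 : 2*(n:ℝ)*w = 1 := by rw [hw_def]; field_simp
  have hwhalf : w ≤ 1/2 := by
    rw [hw_def]
    rw [div_le_div_iff₀ (by positivity) (by norm_num)]
    nlinarith
  -- signs
  set s1 : ℕ → ℝ := fun k => if 0 ≤ f (b + 1 + 2*k*w) then 1 else -1 with hs1_def
  set s2 : ℕ → ℝ := fun k => if 0 ≤ f (b + 3 + (2*k+1)*w) then 1 else -1 with hs2_def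
  set c : ℕ → ℝ := fun i => if 2*n ≤ i ∧ i < 4*n then s1 ((i - 2*n)/2)
    else if 6*n + 1 ≤ i ∧ i ≤ 8*n then s2 ((i - (6*n+1))/2) else 0 with hc_def
  have hcabs : ∀ i, |c i| ≤ 1 := by
    intro i
    rw [hc_def]
    dsimp only
    split_ifs <;> simp [hs1_def, hs2_def] <;> split_ifs <;> norm_num
  set q : ℝ → ℝ := fun x => 8*δ * ∑ i ∈ Finset.range (10*n+1), c i * tent w (b + i*w) x with hq_def
  have hqcont : Continuous q := by
    apply Continuous.mul continuous_const
    apply continuous_finset_sum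
    intro i _
    exact continuous_const.mul (tent_continuous w _)
  clear_value n w s1 s2 c q
  -- two-term reduction
  have key : ∀ m : ℕ, m + 1 ≤ 10*n → ∀ x : ℝ, b + m*w ≤ x → x ≤ b + (m+1)*w →
      (∑ i ∈ Finset.range (10*n+1), c i * tent w (b + i*w) x)
        = c m * (1 - (x - (b + m*w))/w) + c (m+1) * ((x - (b + m*w))/w) := by
    intro m hm x hx1 hx2
    have hsub : ({m, m+1} : Finset ℕ) ⊆ Finset.range (10*n+1) := by
      intro i hi
      simp only [Finset.mem_insert, Finset.mem_singleton] at hi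
      rcases hi with rfl | rfl <;> simp <;> omega
    rw [← Finset.sum_subset hsub ?_]
    · rw [Finset.sum_insert (by simp), Finset.sum_singleton]
      have ht1 : tent w (b + m*w) x = 1 - (x - (b + m*w))/w := by
        apply tent_right _ _ _ hwpos hx1
        push_cast
        linarith
      have ht2 : tent w (b + (m+1:ℕ)*w) x = (x - (b + m*w))/w := by
        rw [tent_left _ _ _ hwpos (by push_cast; linarith) (by push_cast; linarith)]
        push_cast
        field_simp
        ring
      rw [ht1, ht2]
    · intro i hi hinot
      simp only [Finset.mem_insert, Finset.mem_singleton] at hinot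
      push_neg at hinot
      have : tent w (b + i*w) x = 0 := by
        apply tent_eq_zero _ _ _ hwpos
        rcases lt_or_gt_of_ne hinot.1 with hlt | hgt
        · -- i < m
          have : ((i:ℝ) + 1) ≤ m := by exact_mod_cast hlt
          rw [abs_of_nonneg (by nlinarith)]
          nlinarith
        · -- i > m+1, so i ≥ m+2
          have : ((m:ℝ) + 2) ≤ i := by
            have : m + 2 ≤ i := by omega
            exact_mod_cast this
          rw [abs_of_nonpos (by nlinarith)]
          nlinarith
      rw [this, mul_zero]
  -- plateau corollary
  have plateau : ∀ m : ℕ, m + 1 ≤ 10*n → ∀ x : ℝ, b + m*w ≤ x → x ≤ b + (m+1)*w →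
      c m = c (m+1) → q x = 8*δ * c m := by
    intro m hm x hx1 hx2 hcc
    rw [hq_def]
    dsimp only
    rw [key m hm x hx1 hx2, ← hcc]
    ring
  -- global bound
  have hqbound : ∀ x, |q x| ≤ 8 * δ := by
    intro x
    rcases le_or_gt x b with hxb | hxb
    · -- x ≤ b : all terms vanish
      have : q x = 0 := by
        rw [hq_def]
        dsimp only
        rw [Finset.sum_eq_zero, mul_zero]
        intro i hi
        rcases Nat.eq_zero_or_pos i with rfl | hipos
        · have : c 0 = 0 := by
            rw [hc_def]; dsimp only
            rw [if_neg (by omega), if_neg (by omega)]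
          simp [this]
        · have : tent w (b + i*w) x = 0 := by
            apply tent_eq_zero _ _ _ hwpos
            have hi1 : (1:ℝ) ≤ (i:ℝ) := by exact_mod_cast hipos
            rw [abs_of_nonpos (by nlinarith)]
            nlinarith
          rw [this, mul_zero]
      rw [this]; rw [abs_of_nonneg le_rfl]; positivity
    · rcases le_or_gt x (b+5) with hxb5 | hxb5
      · -- interior
        obtain ⟨m, hm, hxge, hxle⟩ : ∃ m : ℕ, m + 1 ≤ 10*n ∧ b + m*w ≤ x ∧ x ≤ b + ((m:ℝ)+1)*w := by
          refine ⟨min (⌊(x - b)/w⌋₊) (10*n - 1), ?_, ?_, ?_⟩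
          · have : min (⌊(x - b)/w⌋₊) (10*n - 1) ≤ 10*n - 1 := min_le_right _ _
            omega
          · have h1 : ((min (⌊(x - b)/w⌋₊) (10*n - 1) : ℕ):ℝ) ≤ (x - b)/w := by
              have h2 : min (⌊(x - b)/w⌋₊) (10*n - 1) ≤ ⌊(x - b)/w⌋₊ := min_le_left _ _
              calc ((min (⌊(x - b)/w⌋₊) (10*n - 1) : ℕ):ℝ) ≤ (⌊(x - b)/w⌋₊ : ℝ) := by exact_mod_cast h2
                _ ≤ (x - b)/w := Nat.floor_le (div_nonneg (by linarith) (le_of_lt hwpos))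
            rw [le_div_iff₀ hwpos] at h1
            linarith
          · rcases le_or_gt (⌊(x - b)/w⌋₊) (10*n - 1) with hmin | hmin
            · rw [min_eq_left hmin]
              have h2 : (x - b)/w < (⌊(x - b)/w⌋₊ : ℝ) + 1 := Nat.lt_floor_add_one ((x - b)/w)
              rw [div_lt_iff₀ hwpos] at h2
              nlinarith
            · rw [min_eq_right (le_of_lt hmin)]
              have hc1 : (((10*n - 1 : ℕ)):ℝ) + 1 = 10*(n:ℝ) := by
                have : (10*n - 1 : ℕ) + 1 = 10*n := by omega
                exact_mod_cast congrArg (Nat.cast (R := ℝ)) this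
              rw [hc1]
              have h10 : (10:ℝ)*n*w = 5 := by nlinarith [hw2]
              nlinarith
        have hkey := key m hm x hxge hxle
        rw [hq_def]
        dsimp only
        rw [hkey]
        set u : ℝ := (x - (b + m*w))/w with hu_def
        have hu0 : 0 ≤ u := by rw [hu_def]; apply div_nonneg _ (le_of_lt hwpos); linarith
        have hu1 : u ≤ 1 := by
          rw [hu_def, div_le_one hwpos]; push_cast at hxle ⊢; nlinarith
        have h1 := hcabs m
        have h2 := hcabs (m+1)
        rw [abs_mul]
        have : |c m * (1 - u) + c (m+1) * u| ≤ 1 := by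
          calc |c m * (1 - u) + c (m+1) * u| ≤ |c m * (1 - u)| + |c (m+1) * u| := abs_add_le _ _
            _ = |c m| * (1 - u) + |c (m+1)| * u := by
                rw [abs_mul, abs_mul, abs_of_nonneg (sub_nonneg.mpr hu1), abs_of_nonneg hu0]
            _ ≤ 1 * (1 - u) + 1 * u := by
                apply add_le_add <;> apply mul_le_mul_of_nonneg_right <;> linarith
            _ = 1 := by ring
        calc |8*δ| * |c m * (1 - u) + c (m+1) * u| ≤ |8*δ| * 1 := by
              apply mul_le_mul_of_nonneg_left this (abs_nonneg _)
          _ = 8*δ := by rw [mul_one, abs_of_nonneg (by linarith)]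
      · -- x > b + 5
        have : q x = 0 := by
          rw [hq_def]
          dsimp only
          rw [Finset.sum_eq_zero, mul_zero]
          intro i hi
          simp only [Finset.mem_range] at hi
          rcases Nat.lt_or_ge i (10*n) with hilt | hige
          · have : tent w (b + i*w) x = 0 := by
              apply tent_eq_zero _ _ _ hwpos
              have hi1 : (i:ℝ) + 1 ≤ 10*(n:ℝ) := by exact_mod_cast hilt
              have h10 : (10:ℝ)*n*w = 5 := by nlinarith [hw2]
              rw [abs_of_nonneg (by nlinarith)]
              nlinarith
            rw [this, mul_zero]
          · have hi10 : i = 10*n := by omega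
            have : c i = 0 := by
              rw [hc_def]; dsimp only
              rw [if_neg (by omega), if_neg (by omega)]
            simp [this]
        rw [this]; rw [abs_of_nonneg le_rfl]; positivity
  -- support left
  have hsupl : ∀ x, x ≤ b + 1/2 → q x = 0 := by
    intro x hx
    rw [hq_def]
    dsimp only
    rw [Finset.sum_eq_zero, mul_zero]
    intro i hi
    rcases Nat.lt_or_ge i (2*n) with hilt | hige
    · have : c i = 0 := by
        rw [hc_def]; dsimp only
        rw [if_neg (by omega), if_neg (by omega)]
      simp [this]
    · have : tent w (b + i*w) x = 0 := by
        apply tent_eq_zero _ _ _ hwpos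
        have hcast : (2*(n:ℝ)) ≤ (i:ℝ) := by exact_mod_cast hige
        have hiw : (1:ℝ) ≤ (i:ℝ)*w := by
          calc (1:ℝ) = 2*(n:ℝ)*w := hw2.symm
            _ ≤ (i:ℝ)*w := by nlinarith
        rw [abs_of_nonpos (by nlinarith)]
        nlinarith
      rw [this, mul_zero]
  -- support right
  have hsupr : ∀ x, b + 9/2 ≤ x → q x = 0 := by
    intro x hx
    rw [hq_def]
    dsimp only
    rw [Finset.sum_eq_zero, mul_zero]
    intro i hi
    rcases Nat.lt_or_ge (8*n) i with hilt | hige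
    · have : c i = 0 := by
        rw [hc_def]; dsimp only
        rw [if_neg (by omega), if_neg (by omega)]
      simp [this]
    · have : tent w (b + i*w) x = 0 := by
        apply tent_eq_zero _ _ _ hwpos
        have hcast : (i:ℝ) ≤ 8*(n:ℝ) := by exact_mod_cast hige
        have hiw : (i:ℝ)*w ≤ 4 := by
          have : (8:ℝ)*(n:ℝ)*w = 4 := by nlinarith [hw2]
          nlinarith
        rw [abs_of_nonneg (by nlinarith)]
        nlinarith
      rw [this, mul_zero]
  -- safety
  have hsafe : ∀ θ : ℝ, 0 ≤ θ → θ < 1 →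
      δ < |f (b + 1 + θ) + q (b + 1 + θ)| ∨ δ < |f (b + 3 + θ) + q (b + 3 + θ)| := by
    intro θ hθ0 hθ1
    set r : ℕ := ⌊2*(n:ℝ)*θ⌋₊ with hr_def
    clear_value r
    have hr2n : r < 2*n := by
      rw [hr_def]
      refine (Nat.floor_lt (by positivity)).mpr ?_
      push_cast
      nlinarith
    have hrle : (r:ℝ)*w ≤ θ := by
      have h1 : (r:ℝ) ≤ 2*(n:ℝ)*θ := by rw [hr_def]; exact Nat.floor_le (by positivity)
      calc (r:ℝ)*w ≤ (2*(n:ℝ)*θ)*w := by nlinarith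
        _ = θ := by nlinarith [hw2]
    have hrge : θ ≤ ((r:ℝ)+1)*w := by
      have h1 : 2*(n:ℝ)*θ < (r:ℝ) + 1 := by rw [hr_def]; exact_mod_cast Nat.lt_floor_add_one (2*(n:ℝ)*θ)
      have hwinv : θ = (2*(n:ℝ)*θ)*w := by nlinarith [hw2]
      nlinarith
    rcases Nat.even_or_odd r with ⟨k, hk⟩ | ⟨k, hk⟩
    · -- even: use window 1
      left
      have hkn : k < n := by omega
      set x : ℝ := b + 1 + θ with hx_def
      clear_value x
      have hνm : b + ((2*n + r : ℕ):ℝ)*w = b + 1 + (r:ℝ)*w := by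
        push_cast
        nlinarith [hw2]
      have hm : (2*n + r) + 1 ≤ 10*n := by omega
      have hx1 : b + ((2*n + r : ℕ):ℝ)*w ≤ x := by rw [hνm, hx_def]; linarith
      have hx2 : x ≤ b + (((2*n + r : ℕ):ℝ)+1)*w := by
        rw [hx_def]
        push_cast
        push_cast at hνm
        nlinarith
      have hceq : c (2*n + r) = c (2*n + r + 1) := by
        rw [hc_def]; dsimp only
        rw [if_pos (by omega), if_pos (by omega)]
        congr 1
        omega
      have hqx : q x = 8*δ * c (2*n + r) := plateau (2*n + r) hm x hx1 hx2 hceq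
      have hcval : c (2*n + r) = s1 k := by
        rw [hc_def]; dsimp only
        rw [if_pos (by omega)]
        congr 1
        omega
      -- sign argument
      set v : ℝ := f (b + 1 + (2*(k:ℝ))*w) with hv_def
      clear_value v
      have hsv : s1 k * v = |v| := by
        rw [hs1_def, hv_def]; dsimp only
        split_ifs with hcase
        · rw [abs_of_nonneg hcase]; ring
        · push_neg at hcase
          rw [abs_of_neg hcase]; ring
      have hs_sq : s1 k * s1 k = 1 := by
        rw [hs1_def]; dsimp only
        split_ifs <;> norm_num
      have hs_abs : |s1 k| = 1 := by
        rw [hs1_def]; dsimp only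
        split_ifs <;> norm_num
      -- closeness of f x to v
      have hsample : b + 1 + (2*(k:ℝ))*w = b + 1 + (r:ℝ)*w := by
        have : ((r:ℕ):ℝ) = 2*(k:ℝ) := by exact_mod_cast (by omega : r = 2*k)
        rw [this]
      have hfx_close : |f x - v| ≤ δ := by
        have hx_mem : x ∈ Icc b (b+5) := by
          rw [hx_def]; constructor <;> [linarith; linarith]
        have hv_mem : b + 1 + (2*(k:ℝ))*w ∈ Icc b (b+5) := by
          rw [hsample]
          have hrw0 : 0 ≤ (r:ℝ)*w := by positivity
          have hrw1 : (r:ℝ)*w ≤ 1 := by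
            have : (r:ℝ) ≤ 2*(n:ℝ) := by exact_mod_cast le_of_lt hr2n
            nlinarith
          constructor <;> linarith
        have hdist : dist x (b + 1 + (2*(k:ℝ))*w) ≤ η := by
          rw [Real.dist_eq, hsample, hx_def]
          rw [abs_of_nonneg (by linarith)]
          have : θ - (r:ℝ)*w ≤ w := by linarith
          linarith
        have := hmod x hx_mem _ hv_mem hdist
        rw [Real.dist_eq] at this
        rw [hv_def]
        exact this
      -- conclude
      have hgoal : 7*δ ≤ s1 k * (f x + q x) := by
        rw [hqx, hcval]
        have hexp1 : s1 k * (f x - v) = s1 k * f x - s1 k * v := by ring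
        have hthis : s1 k * (f x - v) ≥ -|f x - v| := by
          calc s1 k * (f x - v) ≥ -|s1 k * (f x - v)| := neg_abs_le _
            _ = -(|s1 k| * |f x - v|) := by rw [abs_mul]
            _ = -|f x - v| := by rw [hs_abs, one_mul]
        have h2 : s1 k * v ≥ 0 := by rw [hsv]; exact abs_nonneg _
        have hexpand : s1 k * (f x + 8*δ*s1 k) = s1 k * f x + 8*δ*(s1 k * s1 k) := by ring
        rw [hs_sq, mul_one] at hexpand
        rw [hexpand]
        linarith [hthis, hexp1, h2, hfx_close]
      calc δ < 7*δ := by linarith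
        _ ≤ s1 k * (f x + q x) := hgoal
        _ ≤ |s1 k * (f x + q x)| := le_abs_self _
        _ = |f x + q x| := by rw [abs_mul, hs_abs, one_mul]
    · -- odd: use window 2
      right
      have hkn : k ≤ n - 1 := by omega
      set x : ℝ := b + 3 + θ with hx_def
      clear_value x
      have hνm : b + ((6*n + r : ℕ):ℝ)*w = b + 3 + (r:ℝ)*w := by
        push_cast
        nlinarith [hw2]
      have hm : (6*n + r) + 1 ≤ 10*n := by omega
      have hx1 : b + ((6*n + r : ℕ):ℝ)*w ≤ x := by rw [hνm, hx_def]; linarith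
      have hx2 : x ≤ b + (((6*n + r : ℕ):ℝ)+1)*w := by
        rw [hx_def]
        push_cast
        push_cast at hνm
        nlinarith
      have hceq : c (6*n + r) = c (6*n + r + 1) := by
        rw [hc_def]; dsimp only
        rw [if_neg (by omega), if_pos (by omega), if_neg (by omega), if_pos (by omega)]
        congr 1
        omega
      have hqx : q x = 8*δ * c (6*n + r) := plateau (6*n + r) hm x hx1 hx2 hceq
      have hcval : c (6*n + r) = s2 k := by
        rw [hc_def]; dsimp only
        rw [if_neg (by omega), if_pos (by omega)]
        congr 1
        omega
      set v : ℝ := f (b + 3 + (2*(k:ℝ)+1)*w) with hv_def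
      clear_value v
      have hsv : s2 k * v = |v| := by
        rw [hs2_def, hv_def]; dsimp only
        split_ifs with hcase
        · rw [abs_of_nonneg hcase]; ring
        · push_neg at hcase
          rw [abs_of_neg hcase]; ring
      have hs_sq : s2 k * s2 k = 1 := by
        rw [hs2_def]; dsimp only
        split_ifs <;> norm_num
      have hs_abs : |s2 k| = 1 := by
        rw [hs2_def]; dsimp only
        split_ifs <;> norm_num
      have hsample : b + 3 + (2*(k:ℝ)+1)*w = b + 3 + (r:ℝ)*w := by
        have : ((r:ℕ):ℝ) = 2*(k:ℝ)+1 := by exact_mod_cast (by omega : r = 2*k+1)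
        rw [this]
      have hfx_close : |f x - v| ≤ δ := by
        have hx_mem : x ∈ Icc b (b+5) := by
          rw [hx_def]; constructor <;> [linarith; linarith]
        have hv_mem : b + 3 + (2*(k:ℝ)+1)*w ∈ Icc b (b+5) := by
          rw [hsample]
          have hrw0 : 0 ≤ (r:ℝ)*w := by positivity
          have hrw1 : (r:ℝ)*w ≤ 1 := by
            have : (r:ℝ) ≤ 2*(n:ℝ) := by exact_mod_cast le_of_lt hr2n
            nlinarith
          constructor <;> linarith
        have hdist : dist x (b + 3 + (2*(k:ℝ)+1)*w) ≤ η := by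
          rw [Real.dist_eq, hsample, hx_def]
          rw [abs_of_nonneg (by linarith)]
          have : θ - (r:ℝ)*w ≤ w := by linarith
          linarith
        have := hmod x hx_mem _ hv_mem hdist
        rw [Real.dist_eq] at this
        rw [hv_def]
        exact this
      have hgoal : 7*δ ≤ s2 k * (f x + q x) := by
        rw [hqx, hcval]
        have hexp1 : s2 k * (f x - v) = s2 k * f x - s2 k * v := by ring
        have hthis : s2 k * (f x - v) ≥ -|f x - v| := by
          calc s2 k * (f x - v) ≥ -|s2 k * (f x - v)| := neg_abs_le _
            _ = -(|s2 k| * |f x - v|) := by rw [abs_mul]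
            _ = -|f x - v| := by rw [hs_abs, one_mul]
        have h2 : s2 k * v ≥ 0 := by rw [hsv]; exact abs_nonneg _
        have hexpand : s2 k * (f x + 8*δ*s2 k) = s2 k * f x + 8*δ*(s2 k * s2 k) := by ring
        rw [hs_sq, mul_one] at hexpand
        rw [hexpand]
        linarith [hthis, hexp1, h2, hfx_close]
      calc δ < 7*δ := by linarith
        _ ≤ s2 k * (f x + q x) := hgoal
        _ ≤ |s2 k * (f x + q x)| := le_abs_self _
        _ = |f x + q x| := by rw [abs_mul, hs_abs, one_mul]
  exact ⟨q, hqcont, hqbound, hsupl, hsupr, hsafe⟩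


end Stmt10Aux

set_option maxHeartbeats 4000000 in
/-- U(ℓ^∞) is nowhere dense in (C(ℝ), d_∞). -/
theorem stmt10 :
    ∀ f : ℝ → ℝ, Continuous f → ∀ ε > (0 : ℝ),
      ∃ g : ℝ → ℝ, Continuous g ∧ dinf f g < ε ∧
        ∃ δ > (0 : ℝ), ∀ h : ℝ → ℝ, Continuous h → dinf g h < δ →
          ¬ memU {x | Bdd x} h := by
  intro f hf ε hε
  set ε' : ℝ := min ε 1 with hε'_def
  have hε'pos : 0 < ε' := lt_min hε one_pos
  have hε'le : ε' ≤ ε := min_le_left _ _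
  have hε'1 : ε' ≤ 1 := min_le_right _ _
  set δ : ℝ := ε'/32 with hδ_def
  have hδ : 0 < δ := by positivity
  have hδ1 : δ < 1 := by rw [hδ_def]; linarith
  -- blocks
  choose Q hQcont hQbound hQsupl hQsupr hQsafe using
    fun j : ℕ => block f hf (6*j) δ hδ
  -- global perturbation
  set p : ℝ → ℝ := fun x => if 0 ≤ x then Q (⌊x/6⌋.toNat) x else 0 with hp_def
  have hpQQ : ∀ x : ℝ, 0 ≤ x → p x = Q (⌊x/6⌋.toNat) x := by
    intro x hx
    rw [hp_def]
    simp only [if_pos hx]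
  have hfloor : ∀ (j : ℕ) (x : ℝ), 6*(j:ℝ) ≤ x → x < 6*(j:ℝ) + 6 → (⌊x/6⌋.toNat) = j := by
    intro j x h1 h2
    have : ⌊x/6⌋ = (j:ℤ) := by
      rw [Int.floor_eq_iff]
      constructor
      · rw [le_div_iff₀ (by norm_num)]
        push_cast
        linarith
      · rw [div_lt_iff₀ (by norm_num)]
        push_cast
        linarith
    rw [this, Int.toNat_natCast]
  have hpQ : ∀ (j : ℕ) (x : ℝ), 6*(j:ℝ) ≤ x → x < 6*(j:ℝ) + 6 → p x = Q j x := by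
    intro j x h1 h2
    have hx0 : (0:ℝ) ≤ x := le_trans (by positivity) h1
    rw [hpQQ x hx0, hfloor j x h1 h2]
  have hpbound : ∀ x, |p x| ≤ 8*δ := by
    intro x
    rcases le_or_gt 0 x with hx | hx
    · rw [hpQQ x hx]; exact hQbound _ x
    · rw [hp_def]; simp only [if_neg (not_le.mpr hx)]
      rw [abs_of_nonneg le_rfl]; positivity
  -- p vanishes near multiples of 6
  have hp0 : ∀ (j : ℕ) (x : ℝ), 6*(j:ℝ) - 1/2 < x → x < 6*(j:ℝ) + 1/2 → p x = 0 := by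
    intro j x h1 h2
    rcases lt_or_ge x 0 with hx | hx
    · rw [hp_def]; simp only [if_neg (not_le.mpr hx)]
    · rcases le_or_gt (6*(j:ℝ)) x with hge | hlt
      · rw [hpQ j x hge (by linarith)]
        exact hQsupl j x (by linarith)
      · -- x < 6j, so j ≥ 1 and x in previous block
        have hj1 : 1 ≤ j := by
          rcases Nat.eq_zero_or_pos j with rfl | hposj
          · exfalso; simp at hlt; linarith
          · exact hposj
        have hjc : (1:ℝ) ≤ (j:ℝ) := by exact_mod_cast hj1
        have e1 : 6*((j-1 : ℕ):ℝ) = 6*(j:ℝ) - 6 := by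
          have : ((j-1:ℕ):ℝ) = (j:ℝ) - 1 := by
            have : (j:ℤ) - 1 = ((j-1:ℕ):ℤ) := by omega
            exact_mod_cast this.symm
          rw [this]; ring
        rw [hpQ (j-1) x (by rw [e1]; linarith) (by rw [e1]; linarith)]
        exact hQsupr (j-1) x (by rw [e1]; linarith)
  have hpcont : Continuous p := by
    rw [continuous_iff_continuousAt]
    intro x₀
    rcases lt_or_ge x₀ 0 with hneg | hnonneg
    · have hev : (fun _ : ℝ => (0:ℝ)) =ᶠ[nhds x₀] p := by
        filter_upwards [Iio_mem_nhds hneg] with x hx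
        have hx' : x < 0 := hx
        rw [hp_def]; simp only [if_neg (not_le.mpr hx')]
      exact ContinuousAt.congr continuousAt_const hev
    · set j : ℕ := ⌊x₀/6⌋.toNat with hj_def
      have hjb : 6*(j:ℝ) ≤ x₀ ∧ x₀ < 6*(j:ℝ) + 6 := by
        have h0 : (0:ℤ) ≤ ⌊x₀/6⌋ := Int.floor_nonneg.mpr (div_nonneg hnonneg (by norm_num))
        have hcast : ((j:ℕ):ℝ) = ((⌊x₀/6⌋ : ℤ):ℝ) := by
          rw [hj_def]
          exact_mod_cast congrArg (fun z : ℤ => (z : ℝ)) (Int.toNat_of_nonneg h0)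
        constructor
        · rw [hcast]
          have := Int.floor_le (x₀/6)
          nlinarith [this]
        · rw [hcast]
          have := Int.lt_floor_add_one (x₀/6)
          nlinarith [this]
      rcases eq_or_lt_of_le hjb.1 with heq | hlt
      · have hev : (fun _ : ℝ => (0:ℝ)) =ᶠ[nhds x₀] p := by
          filter_upwards [Ioo_mem_nhds (by linarith : x₀ - 1/2 < x₀) (by linarith : x₀ < x₀ + 1/2)] with x hx
          have hx1 : x₀ - 1/2 < x := hx.1
          have hx2 : x < x₀ + 1/2 := hx.2
          refine (hp0 j x ?_ ?_).symm
          · rw [heq]; linarith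
          · rw [heq]; linarith
        exact ContinuousAt.congr continuousAt_const hev
      · have hev : (Q j) =ᶠ[nhds x₀] p := by
          filter_upwards [Ioo_mem_nhds hlt hjb.2] with x hx
          exact (hpQ j x (le_of_lt hx.1) hx.2).symm
        exact ContinuousAt.congr (hQcont j).continuousAt hev
  -- the approximant
  refine ⟨fun x => f x + p x, hf.add hpcont, ?_, δ, hδ, ?_⟩
  · -- dinf f g < ε
    have hb : ∀ x : ℝ, ENNReal.ofReal |f x - (f x + p x)| ≤ ENNReal.ofReal (8*δ) := by
      intro x
      apply ENNReal.ofReal_le_ofReal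
      have : f x - (f x + p x) = -(p x) := by ring
      rw [this, abs_neg]
      exact hpbound x
    have hS : (⨆ x : ℝ, ENNReal.ofReal |f x - (f x + p x)|) ≤ ENNReal.ofReal (8*δ) := iSup_le hb
    have hmin : (min (⨆ x : ℝ, ENNReal.ofReal |f x - (f x + p x)|) 1) ≤ ENNReal.ofReal (8*δ) :=
      le_trans (min_le_left _ _) hS
    calc dinf f (fun x => f x + p x)
        ≤ (ENNReal.ofReal (8*δ)).toReal := by
          apply ENNReal.toReal_mono ENNReal.ofReal_ne_top hmin
      _ = 8*δ := ENNReal.toReal_ofReal (by positivity)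
      _ < ε := by rw [hδ_def]; linarith
  · -- the ball around g avoids U
    intro h hhcont hdist
    -- pointwise bound
    have hpt : ∀ x : ℝ, |(f x + p x) - h x| < δ := by
      set S : ENNReal := ⨆ x : ℝ, ENNReal.ofReal |(f x + p x) - h x| with hS_def
      have hdinf : dinf (fun x => f x + p x) h = (min S 1).toReal := rfl
      rcases le_or_gt S 1 with hS1 | hS1
      · have hmin : min S 1 = S := min_eq_left hS1
        have hne : S ≠ ⊤ := ne_top_of_le_ne_top ENNReal.one_ne_top hS1
        have hlt : S < ENNReal.ofReal δ := by
          rw [ENNReal.lt_ofReal_iff_toReal_lt hne]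
          rw [hdinf, hmin] at hdist
          exact hdist
        intro x
        have h1 : ENNReal.ofReal |(f x + p x) - h x| ≤ S := le_iSup (fun x => ENNReal.ofReal |(f x + p x) - h x|) x
        have h2 : ENNReal.ofReal |(f x + p x) - h x| < ENNReal.ofReal δ := lt_of_le_of_lt h1 hlt
        exact (ENNReal.ofReal_lt_ofReal_iff hδ).mp h2
      · exfalso
        have hmin : min S 1 = 1 := min_eq_right (le_of_lt hS1)
        rw [hdinf, hmin] at hdist
        simp at hdist
        linarith
    -- assume h is universal
    intro hmem
    obtain ⟨-, hint⟩ := hmem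
    obtain ⟨t, ht⟩ := hint (fun _ => (0:ℝ)) ⟨0, fun n => by simp⟩
    obtain ⟨j, hj⟩ := exists_nat_ge (t/6)
    have ht6 : t ≤ 6*(j:ℝ) := by
      rw [div_le_iff₀ (by norm_num : (0:ℝ) < 6)] at hj
      linarith
    set y : ℝ := 6*(j:ℝ) + 1 - t with hy_def
    have hy1 : 1 ≤ y := by rw [hy_def]; linarith
    set n₁ : ℕ := (⌈y⌉).toNat with hn₁_def
    have hn₁cast : ((n₁:ℕ):ℝ) = ((⌈y⌉:ℤ):ℝ) := by
      rw [hn₁_def]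
      exact_mod_cast congrArg (fun z : ℤ => (z : ℝ)) (Int.toNat_of_nonneg (Int.ceil_nonneg (by linarith : (0:ℝ) ≤ y)))
    set θ : ℝ := t + (n₁:ℝ) - (6*(j:ℝ) + 1) with hθ_def
    have hθ0 : 0 ≤ θ := by
      rw [hθ_def, hn₁cast]
      have := Int.le_ceil y
      rw [hy_def] at this
      linarith
    have hθ1 : θ < 1 := by
      rw [hθ_def, hn₁cast]
      have := Int.ceil_lt_add_one y
      rw [hy_def] at this
      linarith
    have hz1 : 6*(j:ℝ) + 1 + θ = t + (n₁:ℝ) := by rw [hθ_def]; ring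
    have hz2 : 6*(j:ℝ) + 3 + θ = t + ((n₁ + 2 : ℕ):ℝ) := by rw [hθ_def]; push_cast; ring
    rcases hQsafe j θ hθ0 hθ1 with hcase | hcase
    · have hzin1 : 6*(j:ℝ) < 6*(j:ℝ) + 1 + θ := by linarith
      have hzin2 : 6*(j:ℝ) + 1 + θ < 6*(j:ℝ) + 6 := by linarith
      have hpz : p (6*(j:ℝ) + 1 + θ) = Q j (6*(j:ℝ) + 1 + θ) := hpQ j _ (le_of_lt hzin1) hzin2
      have hzero : h (6*(j:ℝ) + 1 + θ) = 0 := by rw [hz1]; exact ht n₁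
      have := hpt (6*(j:ℝ) + 1 + θ)
      rw [hzero, hpz, sub_zero] at this
      linarith [hcase, this]
    · have hzin1 : 6*(j:ℝ) < 6*(j:ℝ) + 3 + θ := by linarith
      have hzin2 : 6*(j:ℝ) + 3 + θ < 6*(j:ℝ) + 6 := by linarith
      have hpz : p (6*(j:ℝ) + 3 + θ) = Q j (6*(j:ℝ) + 3 + θ) := hpQ j _ (le_of_lt hzin1) hzin2
      have hzero : h (6*(j:ℝ) + 3 + θ) = 0 := by rw [hz2]; exact ht (n₁ + 2)
      have := hpt (6*(j:ℝ) + 3 + θ)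
      rw [hzero, hpz, sub_zero] at this
      linarith [hcase, this]
end

section
/- The set U_N(ℓ^∞) of nearly universal functions — continuous f : ℝ → ℝ such that for every bounded real sequence (x_n), inf_{t∈ℝ} sup_n |f(t+n) − x_n| = 0 — is nowhere dense in C(ℝ) with metric d_∞(f,g) = min(‖f−g‖_∞, 1). -/
open Filter Set

noncomputable section
namespace NWD

structure Dat (f : ℝ → ℝ) (β : ℝ) where
  N : ℤ → ℕ
  Nodd : ∀ m, Odd (N m)
  Npos : ∀ m, 0 < N m
  UC : ∀ m : ℤ, ∀ u ∈ Icc (m:ℝ) (m+1), ∀ v ∈ Icc (m:ℝ) (m+1),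
        |u - v| ≤ 1/(N m) → |f u - f v| ≤ β/2

def cl (t : ℝ) : ℝ := max 0 (min 1 t)
def rule (β v : ℝ) : ℝ := if |v| < 2*β then 2*β else v

lemma cl_nonneg (t : ℝ) : 0 ≤ cl t := le_max_left _ _
lemma cl_le_one (t : ℝ) : cl t ≤ 1 := max_le zero_le_one (min_le_left _ _)
lemma cl_of_nonpos {t : ℝ} (h : t ≤ 0) : cl t = 0 := by
  unfold cl; rw [max_eq_left]; exact le_trans (min_le_right _ _) h
lemma cl_of_one_le {t : ℝ} (h : 1 ≤ t) : cl t = 1 := by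
  unfold cl; rw [min_eq_left h, max_eq_right zero_le_one]
lemma continuous_cl : Continuous cl :=
  continuous_const.max (continuous_const.min continuous_id)


lemma rule_abs {β v : ℝ} (hβ : 0 < β) : 2*β ≤ |rule β v| := by
  unfold rule; split
  · rw [abs_of_pos (by linarith)]
  · linarith [not_lt.mp ‹¬ |v| < 2*β›]

lemma rule_close {β v : ℝ} (hβ : 0 < β) : |rule β v - v| ≤ 4*β := by
  unfold rule; split
  · have h := ‹|v| < 2*β›
    have h1 := abs_lt.mp h
    rw [abs_le]; constructor <;> linarith
  · simp [abs_nonneg]; linarith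


lemma exists_dat {f : ℝ → ℝ} (hf : Continuous f) {β : ℝ} (hβ : 0 < β) :
    Nonempty (Dat f β) := by
  have key : ∀ m : ℤ, ∃ N : ℕ, Odd N ∧ 0 < N ∧ ∀ u ∈ Icc (m:ℝ) (m+1), ∀ v ∈ Icc (m:ℝ) (m+1),
      |u - v| ≤ 1/(N:ℝ) → |f u - f v| ≤ β/2 := by
    intro m
    have huc : UniformContinuousOn f (Icc (m:ℝ) (m+1)) :=
      isCompact_Icc.uniformContinuousOn_of_continuous hf.continuousOn
    rw [Metric.uniformContinuousOn_iff] at huc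
    obtain ⟨δ, hδ, hd⟩ := huc (β/2) (by linarith)
    refine ⟨2*⌈1/δ⌉₊+1, ⟨⌈1/δ⌉₊, by ring⟩, by positivity, ?_⟩
    intro u hu v hv huv
    have h1 : (1:ℝ)/δ < 2*⌈1/δ⌉₊+1 := by
      have := Nat.le_ceil (1/δ); push_cast; nlinarith [Nat.cast_nonneg (α := ℝ) ⌈1/δ⌉₊]
    have hNpos : (0:ℝ) < 2*(⌈1/δ⌉₊:ℝ)+1 := by positivity
    have h2 : (1:ℝ)/(2*⌈1/δ⌉₊+1) < δ := by
      rw [div_lt_iff₀ hNpos]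
      rw [div_lt_iff₀ hδ] at h1
      nlinarith
    have := hd u hu v hv (by
      rw [Real.dist_eq]
      calc |u - v| ≤ 1/((2*⌈1/δ⌉₊+1 : ℕ):ℝ) := huv
        _ < δ := by push_cast; exact h2)
    rw [Real.dist_eq] at this
    exact le_of_lt this
  exact ⟨⟨fun m => (key m).choose, fun m => (key m).choose_spec.1,
    fun m => (key m).choose_spec.2.1, fun m => (key m).choose_spec.2.2⟩⟩


variable {f : ℝ → ℝ} {β : ℝ}

/-- cell index type -/
abbrev Cell := ℤ × ℕ

variable (D : Dat f β)

/-- length of cells in unit interval m -/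
def Lq (m : ℤ) : ℚ := 1/(D.N m)
/-- left endpoint of a cell -/
def sq (i : Cell) : ℚ := i.1 + i.2 * Lq D i.1
/-- injective encoding -/
def enc (i : Cell) : ℕ := Encodable.encode i
/-- irrational offset coefficient -/
def cq (i : Cell) : ℚ := Lq D i.1 / (100 * 4^(enc i))
/-- ramp center -/
def q (i : Cell) : ℝ := (sq D i : ℝ) + (Lq D i.1 : ℝ)/2 + Real.sqrt 2 * (cq D i : ℝ)
/-- values at cell endpoints -/
def Wl (i : Cell) : ℝ := rule β (f (sq D i))
def Wr (i : Cell) : ℝ := rule β (f ((sq D i + Lq D i.1 : ℚ) : ℝ))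
def Crossing (i : Cell) : Prop := Wl D i * Wr D i < 0
/-- local cells finset -/
def Ji (i : Cell) : Finset Cell :=
  (Finset.Icc (i.1-5) (i.1+5)).biUnion (fun m => (Finset.range (D.N m)).image (fun k => (m,k)))
attribute [local instance] Classical.propDecidable

def Fi (i : Cell) : Finset Cell :=
  (Ji D i).filter (fun j => Crossing D j)
/-- min distance to translated local crossing centers -/
def mdist (i : Cell) : ℝ :=
  (insert i (Fi D i)).inf' ⟨i, Finset.mem_insert_self i _⟩
    (fun j => min |q D i - (q D j + 1)| |q D i - (q D j - 1)|)
/-- ramp half-width -/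
def w (i : Cell) : ℝ := min ((Lq D i.1 : ℝ)/8) (mdist D i) / 3
/-- the per-cell formula -/
def Fc (i : Cell) (u : ℝ) : ℝ := Wl D i + (Wr D i - Wl D i) * cl ((u - (q D i - w D i)) / (2 * w D i))
/-- which cell a point is in -/
def cellOf (u : ℝ) : Cell := (⌊u⌋, ⌊Int.fract u * D.N ⌊u⌋⌋₊)
/-- the approximant -/
def g (u : ℝ) : ℝ := Fc D (cellOf D u) u

/-- validity -/
def Valid (i : Cell) : Prop := i.2 < D.N i.1

lemma Lq_pos (m : ℤ) : 0 < Lq D m := by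
  have := D.Npos m; unfold Lq; positivity

lemma Lq_le_one (m : ℤ) : Lq D m ≤ 1 := by
  have := D.Npos m; unfold Lq
  rw [div_le_one (by exact_mod_cast this)]
  exact_mod_cast this

lemma cellOf_valid (u : ℝ) : Valid D (cellOf D u) := by
  unfold Valid cellOf
  simp only
  have h1 : Int.fract u * D.N ⌊u⌋ < D.N ⌊u⌋ := by
    have := Int.fract_lt_one u
    have hN : (0:ℝ) < D.N ⌊u⌋ := by exact_mod_cast D.Npos ⌊u⌋
    nlinarith
  have h0 : 0 ≤ Int.fract u * D.N ⌊u⌋ :=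
    mul_nonneg (Int.fract_nonneg u) (Nat.cast_nonneg _)
  exact (Nat.floor_lt h0).mpr (by exact_mod_cast h1)


lemma sq_cast (i : Cell) : ((sq D i : ℚ) : ℝ) = (i.1 : ℝ) + (i.2 : ℝ) * ((Lq D i.1 : ℚ) : ℝ) := by
  unfold sq; push_cast; ring

lemma Lq_cast (m : ℤ) : ((Lq D m : ℚ) : ℝ) = 1 / D.N m := by unfold Lq; push_cast; ring

lemma Npos' (m : ℤ) : (0:ℝ) < D.N m := by exact_mod_cast D.Npos m

lemma s_le_self (u : ℝ) : ((sq D (cellOf D u) : ℚ) : ℝ) ≤ u := by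
  rw [sq_cast, Lq_cast]
  unfold cellOf
  simp only
  have hN := Npos' D ⌊u⌋
  have h0 : 0 ≤ Int.fract u * D.N ⌊u⌋ :=
    mul_nonneg (Int.fract_nonneg u) (Nat.cast_nonneg _)
  have h1 : (⌊Int.fract u * D.N ⌊u⌋⌋₊ : ℝ) ≤ Int.fract u * D.N ⌊u⌋ := Nat.floor_le h0
  have hfr : Int.fract u = u - ⌊u⌋ := rfl
  have h2 : (⌊Int.fract u * D.N ⌊u⌋⌋₊ : ℝ) * (1 / D.N ⌊u⌋) ≤ Int.fract u := by
    rw [mul_one_div, div_le_iff₀ hN]; nlinarith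
  linarith [hfr ▸ h2]

lemma lt_s_add (u : ℝ) :
    u < ((sq D (cellOf D u) : ℚ) : ℝ) + ((Lq D (cellOf D u).1 : ℚ) : ℝ) := by
  rw [sq_cast, Lq_cast]
  unfold cellOf
  simp only
  have hN := Npos' D ⌊u⌋
  have h1 : Int.fract u * D.N ⌊u⌋ < ⌊Int.fract u * D.N ⌊u⌋⌋₊ + 1 := Nat.lt_floor_add_one _
  have hfr : Int.fract u = u - ⌊u⌋ := rfl
  have h2 : Int.fract u < ((⌊Int.fract u * D.N ⌊u⌋⌋₊ : ℝ) + 1) * (1 / D.N ⌊u⌋) := by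
    rw [mul_one_div, lt_div_iff₀ hN]; nlinarith
  have h3 := hfr ▸ h2
  nlinarith [h3]

lemma cellOf_eq_of_mem {i : Cell} (hv : Valid D i) {u : ℝ}
    (h1 : ((sq D i : ℚ) : ℝ) ≤ u) (h2 : u < ((sq D i : ℚ) : ℝ) + ((Lq D i.1 : ℚ) : ℝ)) :
    cellOf D u = i := by
  obtain ⟨m, k⟩ := i
  have hN := Npos' D m
  rw [sq_cast, Lq_cast] at h1
  rw [sq_cast, Lq_cast] at h2
  simp only at h1 h2 hv ⊢
  have hkN : (k:ℝ) + 1 ≤ D.N m := by exact_mod_cast hv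
  have hk0 : (0:ℝ) ≤ (k:ℝ) := Nat.cast_nonneg k
  have hs0 : (0:ℝ) ≤ (k:ℝ) * (1/D.N m) := by positivity
  have hs1 : ((k:ℝ)+1) * (1/D.N m) ≤ 1 := by
    rw [mul_one_div, div_le_one hN]; linarith
  have hum : (m:ℝ) ≤ u := by nlinarith
  have hum1 : u < (m:ℝ) + 1 := by nlinarith
  have hfl : ⌊u⌋ = m := by
    rw [Int.floor_eq_iff]; exact ⟨hum, hum1⟩
  unfold cellOf
  rw [hfl]
  have hfr : Int.fract u = u - m := by rw [Int.fract, hfl]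
  have hk1 : (k:ℝ) ≤ Int.fract u * D.N m := by
    rw [hfr]
    have : (k:ℝ) * (1/D.N m) ≤ u - m := by linarith
    rw [mul_one_div, div_le_iff₀ hN] at this; linarith
  have hk2 : Int.fract u * D.N m < k + 1 := by
    rw [hfr]
    have : u - m < ((k:ℝ)+1) * (1/D.N m) := by linarith
    rw [mul_one_div, lt_div_iff₀ hN] at this; linarith
  have : ⌊Int.fract u * D.N m⌋₊ = k := by
    rw [Nat.floor_eq_iff (mul_nonneg (Int.fract_nonneg u) (Nat.cast_nonneg _))]
    constructor
    · exact_mod_cast hk1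
    · exact_mod_cast hk2
  rw [this]


lemma sqrt2_bounds : 1 ≤ Real.sqrt 2 ∧ Real.sqrt 2 < 1.5 := by
  constructor
  · rw [show (1:ℝ) = Real.sqrt 1 from (Real.sqrt_one).symm]
    exact Real.sqrt_le_sqrt (by norm_num)
  · rw [show (1.5:ℝ) = Real.sqrt (1.5^2) from (Real.sqrt_sq (by norm_num)).symm]
    exact Real.sqrt_lt_sqrt (by norm_num) (by norm_num)

lemma cq_pos (i : Cell) : 0 < cq D i := by
  unfold cq; have := Lq_pos D i.1; positivity

lemma cq_le (i : Cell) : cq D i ≤ Lq D i.1 / 100 := by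
  unfold cq
  have hL := Lq_pos D i.1
  rw [div_le_div_iff₀ (by positivity) (by norm_num)]
  have h4 : (1:ℚ) ≤ 4^(enc i) := one_le_pow₀ (by norm_num)
  nlinarith

lemma odd_pow4 {a b x y : ℕ} (ha : Odd a) (hb : Odd b) (h : a*4^x = b*4^y) : x = y ∧ a = b := by
  have H : ∀ {a b x y : ℕ}, Odd a → a*4^x = b*4^y → ¬ x < y := by
    intro a b x y ha h hlt
    have hd : y = (y - x) + x := by omega
    rw [hd, pow_add, ← mul_assoc] at h
    have ha' : a = b * 4^(y-x) := Nat.eq_of_mul_eq_mul_right (by positivity) h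
    have hyx : y - x = (y - x - 1) + 1 := by omega
    have hdvd : 2 ∣ a := by
      rw [ha', hyx, pow_succ]
      exact Dvd.intro (b * 4^(y-x-1) * 2) (by ring)
    rw [Nat.odd_iff] at ha
    omega
  have hxy : x = y := by
    rcases lt_trichotomy x y with hlt | he | hgt
    · exact absurd hlt (H ha h)
    · exact he
    · exact absurd hgt (H hb h.symm)
  subst hxy
  exact ⟨rfl, Nat.eq_of_mul_eq_mul_right (by positivity) h⟩

lemma cq_eq_inv (i : Cell) : cq D i = ((D.N i.1 * (100 * 4^(enc i)) : ℕ) : ℚ)⁻¹ := by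
  unfold cq Lq
  have h1 : ((D.N i.1:ℚ)) ≠ 0 := by
    have := D.Npos i.1; positivity
  push_cast
  field_simp

lemma cq_inj {i j : Cell} (h : cq D i = cq D j) : i = j := by
  rw [cq_eq_inv, cq_eq_inv] at h
  have h2 : ((D.N i.1 * (100 * 4^(enc i)) : ℕ) : ℚ) = ((D.N j.1 * (100 * 4^(enc j)) : ℕ) : ℚ) := by
    have hi : ((D.N i.1 * (100 * 4^(enc i)) : ℕ) : ℚ) ≠ 0 := by
      have := D.Npos i.1; positivity
    have hj : ((D.N j.1 * (100 * 4^(enc j)) : ℕ) : ℚ) ≠ 0 := by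
      have := D.Npos j.1; positivity
    exact inv_injective h
  have h3 : D.N i.1 * (100 * 4^(enc i)) = D.N j.1 * (100 * 4^(enc j)) := by exact_mod_cast h2
  have h4 : (D.N i.1 * 4^(enc i)) * 100 = (D.N j.1 * 4^(enc j)) * 100 := by ring_nf; ring_nf at h3; omega
  have h5 : D.N i.1 * 4^(enc i) = D.N j.1 * 4^(enc j) := by omega
  obtain ⟨he, _⟩ := odd_pow4 (D.Nodd i.1) (D.Nodd j.1) h5
  exact Encodable.encode_injective he

lemma q_ne_shift {i j : Cell} (h : i ≠ j) : q D i + 1 ≠ q D j := by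
  intro he
  unfold q at he
  have hC : cq D i ≠ cq D j := fun hc => h (cq_inj D hc)
  have hCC : ((cq D i - cq D j : ℚ) : ℝ) ≠ 0 := by
    push_cast
    exact sub_ne_zero.mpr (by exact_mod_cast hC)
  have hr : Real.sqrt 2 =
      (((sq D j + Lq D j.1/2 - sq D i - Lq D i.1/2 - 1)/(cq D i - cq D j) : ℚ) : ℝ) := by
    rw [Rat.cast_div, eq_div_iff hCC]
    push_cast
    rw [mul_sub]
    linarith [he]
  exact irrational_sqrt_two ⟨_, hr.symm⟩


lemma q_bounds (i : Cell) :
    ((sq D i : ℚ):ℝ) + ((Lq D i.1 : ℚ):ℝ)/2 < q D i ∧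
    q D i < ((sq D i : ℚ):ℝ) + ((Lq D i.1 : ℚ):ℝ)/2 + ((Lq D i.1 : ℚ):ℝ)/50 := by
  have h2 := sqrt2_bounds
  have hc1 : (0:ℝ) < ((cq D i : ℚ):ℝ) := by exact_mod_cast cq_pos D i
  have hc2 : ((cq D i : ℚ):ℝ) ≤ ((Lq D i.1 : ℚ):ℝ)/100 := by exact_mod_cast cq_le D i
  have hL : (0:ℝ) < ((Lq D i.1 : ℚ):ℝ) := by exact_mod_cast Lq_pos D i.1
  unfold q
  constructor
  · nlinarith
  · nlinarith

lemma mdist_pos (i : Cell) : 0 < mdist D i := by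
  unfold mdist
  refine (Finset.lt_inf'_iff _).mpr ?_
  intro j _
  have h1 : q D i ≠ q D j + 1 := by
    by_cases hij : j = i
    · subst hij; intro hh; linarith [hh]
    · exact fun hh => q_ne_shift D hij hh.symm
  have h2 : q D i ≠ q D j - 1 := by
    by_cases hij : i = j
    · subst hij; intro hh; linarith [hh]
    · intro hh
      exact q_ne_shift D hij (by linarith [hh])
  exact lt_min (abs_pos.mpr (sub_ne_zero.mpr h1)) (abs_pos.mpr (sub_ne_zero.mpr h2))

lemma mdist_le {i j : Cell} (hj : j ∈ insert i (Fi D i)) :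
    mdist D i ≤ min |q D i - (q D j + 1)| |q D i - (q D j - 1)| :=
  Finset.inf'_le _ hj

lemma w_pos (i : Cell) : 0 < w D i := by
  unfold w
  have hL : (0:ℝ) < ((Lq D i.1 : ℚ):ℝ) := by exact_mod_cast Lq_pos D i.1
  have := mdist_pos D i
  have : 0 < min (((Lq D i.1 : ℚ):ℝ)/8) (mdist D i) := lt_min (by linarith) this
  linarith

lemma w_le_L (i : Cell) : w D i ≤ ((Lq D i.1 : ℚ):ℝ)/24 := by
  unfold w
  have := min_le_left (((Lq D i.1 : ℚ):ℝ)/8) (mdist D i)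
  linarith

lemma w_le_mdist (i : Cell) : w D i ≤ mdist D i / 3 := by
  unfold w
  have := min_le_right (((Lq D i.1 : ℚ):ℝ)/8) (mdist D i)
  linarith

lemma Lq_cast_le_one (m : ℤ) : ((Lq D m : ℚ):ℝ) ≤ 1 := by exact_mod_cast Lq_le_one D m

lemma w_le_124 (i : Cell) : w D i ≤ 1/24 := by
  have := w_le_L D i
  have := Lq_cast_le_one D i.1
  linarith

lemma ramp_inside (i : Cell) :
    ((sq D i : ℚ):ℝ) < q D i - w D i ∧ q D i + w D i < ((sq D i : ℚ):ℝ) + ((Lq D i.1 : ℚ):ℝ) := by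
  have hb := q_bounds D i
  have hw1 := w_pos D i
  have hw2 := w_le_L D i
  have hL : (0:ℝ) < ((Lq D i.1 : ℚ):ℝ) := by exact_mod_cast Lq_pos D i.1
  constructor
  · nlinarith [hb.1]
  · nlinarith [hb.2]

lemma sq_range {i : Cell} (hv : Valid D i) :
    (i.1:ℝ) ≤ ((sq D i : ℚ):ℝ) ∧ ((sq D i : ℚ):ℝ) + ((Lq D i.1 : ℚ):ℝ) ≤ (i.1:ℝ) + 1 := by
  rw [sq_cast]
  have hL : (0:ℝ) < ((Lq D i.1 : ℚ):ℝ) := by exact_mod_cast Lq_pos D i.1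
  have hk : ((i.2:ℝ)+1) * ((Lq D i.1 : ℚ):ℝ) ≤ 1 := by
    have hkN : (i.2:ℝ) + 1 ≤ D.N i.1 := by exact_mod_cast hv
    have hN := Npos' D i.1
    have hLeq : ((Lq D i.1 : ℚ):ℝ) = 1 / D.N i.1 := Lq_cast D i.1
    rw [hLeq, mul_one_div, div_le_one hN]
    exact hkN
  constructor
  · nlinarith [Nat.cast_nonneg (α := ℝ) i.2]
  · nlinarith

lemma q_range {i : Cell} (hv : Valid D i) : (i.1:ℝ) ≤ q D i ∧ q D i ≤ (i.1:ℝ) + 2 := by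
  have hb := q_bounds D i
  have hs := sq_range D hv
  have hL : (0:ℝ) < ((Lq D i.1 : ℚ):ℝ) := by exact_mod_cast Lq_pos D i.1
  have hL1 := Lq_cast_le_one D i.1
  constructor <;> nlinarith

lemma mem_Ji {i j : Cell} (hv : Valid D j) (hm : i.1 - 5 ≤ j.1 ∧ j.1 ≤ i.1 + 5) :
    j ∈ Ji D i := by
  unfold Ji
  rw [Finset.mem_biUnion]
  exact ⟨j.1, Finset.mem_Icc.mpr hm, Finset.mem_image.mpr ⟨j.2, Finset.mem_range.mpr hv, rfl⟩⟩

lemma pair_sep {i j : Cell} (hvi : Valid D i) (hvj : Valid D j)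
    (hci : Crossing D i) (hcj : Crossing D j) (hij : i ≠ j) :
    w D i + w D j ≤ (2/3) * |q D i + 1 - q D j| := by
  by_cases hnear : i.1 - 5 ≤ j.1 ∧ j.1 ≤ i.1 + 5
  · have hji : j ∈ insert i (Fi D i) := by
      refine Finset.mem_insert_of_mem ?_
      unfold Fi
      rw [Finset.mem_filter]
      exact ⟨mem_Ji D hvj hnear, hcj⟩
    have hij' : i ∈ insert j (Fi D j) := by
      refine Finset.mem_insert_of_mem ?_
      unfold Fi
      rw [Finset.mem_filter]
      refine ⟨mem_Ji D hvi ⟨by omega, by omega⟩, hci⟩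
    have h1 : mdist D i ≤ |q D i - (q D j - 1)| := le_trans (mdist_le D hji) (min_le_right _ _)
    have h2 : mdist D j ≤ |q D j - (q D i + 1)| := le_trans (mdist_le D hij') (min_le_left _ _)
    have e1 : |q D i - (q D j - 1)| = |q D i + 1 - q D j| := by congr 1; ring
    have e2 : |q D j - (q D i + 1)| = |q D i + 1 - q D j| := abs_sub_comm _ _
    rw [e1] at h1; rw [e2] at h2
    have := w_le_mdist D i
    have := w_le_mdist D j
    linarith
  · push_neg at hnear
    have hcase : j.1 + 6 ≤ i.1 ∨ i.1 + 6 ≤ j.1 := by omega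
    have hqi := q_range D hvi
    have hqj := q_range D hvj
    have h3 : 3 ≤ |q D i + 1 - q D j| := by
      rcases hcase with hc | hc
    
      · have hcr : (j.1:ℝ) + 6 ≤ (i.1:ℝ) := by exact_mod_cast hc
        have : 3 ≤ q D i + 1 - q D j := by linarith [hqi.1, hqj.2]
        exact le_trans this (le_abs_self _)
      · have hcr : (i.1:ℝ) + 6 ≤ (j.1:ℝ) := by exact_mod_cast hc
        have : 3 ≤ -(q D i + 1 - q D j) := by linarith [hqi.2, hqj.1]
        exact le_trans this (neg_le_abs _)
    have := w_le_124 D i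
    have := w_le_124 D j
    linarith


lemma Fc_between (i : Cell) (u : ℝ) :
    min (Wl D i) (Wr D i) ≤ Fc D i u ∧ Fc D i u ≤ max (Wl D i) (Wr D i) := by
  unfold Fc
  set t := cl ((u - (q D i - w D i)) / (2 * w D i)) with ht
  have h0 : 0 ≤ t := cl_nonneg _
  have h1 : t ≤ 1 := cl_le_one _
  rcases le_total (Wl D i) (Wr D i) with hlr | hlr
  · rw [min_eq_left hlr, max_eq_right hlr]
    constructor <;> nlinarith
  · rw [min_eq_right hlr, max_eq_left hlr]
    constructor <;> nlinarith

lemma Fc_out_left {i : Cell} {u : ℝ} (h : u ≤ q D i - w D i) : Fc D i u = Wl D i := by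
  unfold Fc
  rw [cl_of_nonpos (div_nonpos_iff.mpr (Or.inr ⟨by linarith, by linarith [w_pos D i]⟩))]
  ring

lemma Fc_out_right {i : Cell} {u : ℝ} (h : q D i + w D i ≤ u) : Fc D i u = Wr D i := by
  unfold Fc
  have hw := w_pos D i
  rw [cl_of_one_le (by rw [le_div_iff₀ (by linarith)]; linarith)]
  ring

lemma not_crossing_big (hβ : 0 < β) {i : Cell} (hnc : ¬ Crossing D i) (u : ℝ) :
    2*β ≤ |Fc D i u| := by
  have hl := rule_abs (β := β) (v := f (sq D i)) hβ
  have hr := rule_abs (β := β) (v := f ((sq D i + Lq D i.1 : ℚ) : ℝ)) hβ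
  have hl' : 2*β ≤ |Wl D i| := hl
  have hr' : 2*β ≤ |Wr D i| := hr
  unfold Crossing at hnc
  push_neg at hnc
  have hb := Fc_between D i u
  rcases lt_trichotomy (Wl D i) 0 with hneg | hzero | hpos
  · have hrneg : Wr D i < 0 := by
      rcases lt_trichotomy (Wr D i) 0 with h' | h' | h'
      · exact h'
      · exfalso; rw [abs_of_nonneg h'.ge, h'] at hr'; linarith
      · nlinarith
    have h2 : Wl D i ≤ -(2*β) := by rw [abs_of_neg hneg] at hl'; linarith
    have h3 : Wr D i ≤ -(2*β) := by rw [abs_of_neg hrneg] at hr'; linarith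
    have : Fc D i u ≤ -(2*β) := le_trans hb.2 (max_le h2 h3)
    calc 2*β ≤ -(Fc D i u) := by linarith
      _ ≤ |Fc D i u| := neg_le_abs _
  · exfalso; rw [hzero, abs_zero] at hl'; linarith
  · have hrpos : 0 < Wr D i := by
      rcases lt_trichotomy (Wr D i) 0 with h' | h' | h'
      · nlinarith
      · exfalso; rw [abs_of_nonneg h'.ge, h'] at hr'; linarith
      · exact h'
    have h2 : 2*β ≤ Wl D i := by rwa [abs_of_pos hpos] at hl'
    have h3 : 2*β ≤ Wr D i := by rwa [abs_of_pos hrpos] at hr'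
    have : 2*β ≤ Fc D i u := le_trans (le_min h2 h3) hb.1
    exact le_trans this (le_abs_self _)

lemma small_implies (hβ : 0 < β) {u : ℝ} (h : |g D u| < 2*β) :
    Crossing D (cellOf D u) ∧ |u - q D (cellOf D u)| < w D (cellOf D u) := by
  set i := cellOf D u with hi
  have hg : g D u = Fc D i u := rfl
  constructor
  · by_contra hnc
    exact absurd h (not_lt.mpr (hg ▸ not_crossing_big D hβ hnc u))
  · by_contra hout
    rw [not_lt, le_abs] at hout
    have : 2*β ≤ |Fc D i u| := by
      rcases hout with h' | h'
      · rw [Fc_out_right D (by linarith)]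
        exact rule_abs hβ
      · rw [Fc_out_left D (by linarith)]
        exact rule_abs hβ
    exact absurd h (not_lt.mpr (hg ▸ this))

/-- the key geometric property of g -/
lemma main_avoid (hβ : 0 < β) (u : ℝ) : 2*β ≤ |g D u| ∨ 2*β ≤ |g D (u+1)| := by
  by_contra hcon
  push_neg at hcon
  obtain ⟨h1, h2⟩ := hcon
  obtain ⟨hc1, hd1⟩ := small_implies D hβ h1
  obtain ⟨hc2, hd2⟩ := small_implies D hβ h2
  set i := cellOf D u
  set j := cellOf D (u+1)
  have hvi := cellOf_valid D u
  have hvj := cellOf_valid D (u+1)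
  by_cases hij : i = j
  · rw [← hij] at hd2
    have hw := w_le_124 D i
    have h3 : (1:ℝ) ≤ |u + 1 - q D i| + |u - q D i| := by
      have e : (u + 1 - q D i) - (u - q D i) = (1:ℝ) := by ring
      have ht := abs_sub (u + 1 - q D i) (u - q D i)
      rw [e] at ht
      simpa using ht
    linarith [hd1, hd2]
  · have hps := pair_sep D hvi hvj hc1 hc2 hij
    have htri : |q D i + 1 - q D j| ≤ |q D i - u| + |u + 1 - q D j| := by
      have : q D i + 1 - q D j = (q D i - u) + (u + 1 - q D j) := by ring
      rw [this]
      exact abs_add_le _ _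
    rw [abs_sub_comm (q D i) u] at htri
    have habs : 0 ≤ |q D i + 1 - q D j| := abs_nonneg _
    linarith


lemma g_close (hβ : 0 < β) (u : ℝ) : |g D u - f u| ≤ 5*β := by
  set i := cellOf D u with hidef
  have hv := cellOf_valid D u
  have h1 := s_le_self D u
  have h2 := lt_s_add D u
  have hsr := sq_range D hv
  have hL : ((Lq D i.1 : ℚ):ℝ) = 1 / D.N i.1 := Lq_cast D i.1
  have hLpos : (0:ℝ) < ((Lq D i.1 : ℚ):ℝ) := by exact_mod_cast Lq_pos D i.1
  -- memberships in Icc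
  have hmem_u : u ∈ Icc (i.1:ℝ) ((i.1:ℝ)+1) := ⟨le_trans hsr.1 h1, by linarith [h2, hsr.2]⟩
  have hmem_s : ((sq D i : ℚ):ℝ) ∈ Icc (i.1:ℝ) ((i.1:ℝ)+1) := ⟨hsr.1, by linarith [hsr.2]⟩
  have hmem_s' : ((sq D i + Lq D i.1 : ℚ):ℝ) ∈ Icc (i.1:ℝ) ((i.1:ℝ)+1) := by
    push_cast
    constructor
    · push_cast at hsr; linarith [hsr.1]
    · push_cast at hsr; linarith [hsr.2]
  have hUC1 : |f u - f ((sq D i : ℚ):ℝ)| ≤ β/2 := by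
    apply D.UC i.1 u hmem_u _ hmem_s
    rw [abs_of_nonneg (by linarith), ← hL]
    linarith
  have hUC2 : |f u - f ((sq D i + Lq D i.1 : ℚ):ℝ)| ≤ β/2 := by
    apply D.UC i.1 u hmem_u _ hmem_s'
    rw [abs_of_nonpos (by push_cast; push_cast at h2; linarith), ← hL]
    push_cast
    push_cast at h1
    linarith
  have hWl : |Wl D i - f ((sq D i : ℚ):ℝ)| ≤ 4*β := rule_close hβ
  have hWr : |Wr D i - f ((sq D i + Lq D i.1 : ℚ):ℝ)| ≤ 4*β := rule_close hβ
  have hbl : |Wl D i - f u| ≤ 4*β + β/2 := by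
    have := abs_sub_le (Wl D i) (f ((sq D i : ℚ):ℝ)) (f u)
    rw [abs_sub_comm (f ((sq D i : ℚ):ℝ))] at this
    linarith
  have hbr : |Wr D i - f u| ≤ 4*β + β/2 := by
    have := abs_sub_le (Wr D i) (f ((sq D i + Lq D i.1 : ℚ):ℝ)) (f u)
    rw [abs_sub_comm (f ((sq D i + Lq D i.1 : ℚ):ℝ))] at this
    linarith
  have hb := Fc_between D i u
  have hg : g D u = Fc D i u := rfl
  rw [hg]
  rw [abs_le]
  have l1 := abs_le.mp hbl
  have l2 := abs_le.mp hbr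
  constructor
  · have : min (Wl D i) (Wr D i) ≥ f u - (4*β + β/2) := le_min (by linarith) (by linarith)
    linarith [hb.1]
  · have : max (Wl D i) (Wr D i) ≤ f u + (4*β + β/2) := max_le (by linarith) (by linarith)
    linarith [hb.2]


lemma Fc_cont (i : Cell) : Continuous (Fc D i) := by
  unfold Fc
  exact continuous_const.add (continuous_const.mul (continuous_cl.comp
    ((continuous_id.sub continuous_const).div_const _)))

lemma pred_exists {i : Cell} (hv : Valid D i) :
    ∃ p : Cell, Valid D p ∧ (sq D p + Lq D p.1 : ℚ) = sq D i ∧ sq D p < sq D i := by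
  obtain ⟨m, k⟩ := i
  match k with
  | Nat.succ k' =>
    refine ⟨(m, k'), ?_, ?_, ?_⟩
    · exact Nat.lt_of_succ_lt hv
    · unfold sq
      simp only
      push_cast
      ring
    · unfold sq
      simp only
      have := Lq_pos D m
      push_cast
      nlinarith
  | 0 =>
    have hN := D.Npos (m-1)
    refine ⟨(m-1, D.N (m-1) - 1), ?_, ?_, ?_⟩
    · unfold Valid
      simp only
      omega
    · unfold sq Lq
      simp only
      have hc : ((D.N (m-1) - 1 : ℕ) : ℚ) = (D.N (m-1) : ℚ) - 1 := by
        push_cast [Nat.cast_sub hN]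
        ring
      rw [hc]
      have hne : (D.N (m-1) : ℚ) ≠ 0 := by positivity
      push_cast
      field_simp
      ring
    · unfold sq Lq
      simp only
      have hc : ((D.N (m-1) - 1 : ℕ) : ℚ) = (D.N (m-1) : ℚ) - 1 := by
        push_cast [Nat.cast_sub hN]
        ring
      rw [hc]
      have hN' : (0:ℚ) < (D.N (m-1) : ℚ) := by exact_mod_cast hN
      have h1 : ((D.N (m-1) : ℚ) - 1) * (1/(D.N (m-1):ℚ)) < 1 := by
        rw [mul_one_div, div_lt_one hN']
        linarith
      push_cast
      nlinarith

lemma g_cont : Continuous (g D) := by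
  rw [continuous_iff_continuousAt]
  intro u₀
  set i := cellOf D u₀ with hidef
  have hv := cellOf_valid D u₀
  have h1 := s_le_self D u₀
  have h2 := lt_s_add D u₀
  by_cases h0 : ((sq D i : ℚ):ℝ) < u₀
  · -- interior of the cell
    apply ContinuousAt.congr ((Fc_cont D i).continuousAt)
    apply Filter.eventuallyEq_of_mem (Ioo_mem_nhds h0 h2)
    intro u hu
    show Fc D i u = g D u
    unfold g
    rw [cellOf_eq_of_mem D hv hu.1.le hu.2]
  · -- u₀ is the left endpoint of its cell
    have hu0 : u₀ = ((sq D i:ℚ):ℝ) := le_antisymm (not_lt.mp h0) h1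
    obtain ⟨p, hvp, hpe, hps⟩ := pred_exists D hv
    have hpeR : ((sq D p : ℚ):ℝ) + ((Lq D p.1 : ℚ):ℝ) = ((sq D i : ℚ):ℝ) := by
      exact_mod_cast congrArg (fun x : ℚ => (x : ℝ)) hpe
    have hpsR : ((sq D p : ℚ):ℝ) < ((sq D i : ℚ):ℝ) := by exact_mod_cast hps
    have hWrl : Wr D p = Wl D i := by
      unfold Wr Wl
      rw [hpe]
    have hgu : g D u₀ = Wl D i := by
      show Fc D i u₀ = Wl D i
      apply Fc_out_left
      have h3 := (ramp_inside D i).1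
      linarith
    have hr : Filter.Tendsto (g D) (nhdsWithin u₀ (Ici u₀)) (nhds (g D u₀)) := by
      have hev : g D =ᶠ[nhdsWithin u₀ (Ici u₀)] Fc D i := by
        apply Filter.eventuallyEq_of_mem
          (Ico_mem_nhdsGE (show u₀ < ((sq D i:ℚ):ℝ) + ((Lq D i.1:ℚ):ℝ) from h2))
        intro u hu
        show g D u = Fc D i u
        unfold g
        rw [cellOf_eq_of_mem D hv (by rw [← hu0]; exact hu.1) hu.2]
      rw [Filter.tendsto_congr' hev]
      have hval : Fc D i u₀ = g D u₀ := rfl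
      rw [← hval]
      exact ((Fc_cont D i).tendsto u₀).mono_left nhdsWithin_le_nhds
    have hl : Filter.Tendsto (g D) (nhdsWithin u₀ (Iio u₀)) (nhds (g D u₀)) := by
      have hev : g D =ᶠ[nhdsWithin u₀ (Iio u₀)] Fc D p := by
        apply Filter.eventuallyEq_of_mem
          (Ico_mem_nhdsLT (a := ((sq D p:ℚ):ℝ)) (b := u₀) (by linarith [hpsR]))
        intro u hu
        show g D u = Fc D p u
        unfold g
        rw [cellOf_eq_of_mem D hvp hu.1 (by rw [hpeR, ← hu0]; exact hu.2)]
      rw [Filter.tendsto_congr' hev]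
      have hval : Fc D p u₀ = g D u₀ := by
        rw [hgu, ← hWrl]
        apply Fc_out_right
        have h3 := (ramp_inside D p).2
        linarith [hpeR]
      rw [← hval]
      exact ((Fc_cont D p).tendsto u₀).mono_left nhdsWithin_le_nhds
    have hsup : nhdsWithin u₀ (Iio u₀) ⊔ nhdsWithin u₀ (Ici u₀) = nhds u₀ :=
      nhdsLT_sup_nhdsGE u₀
    unfold ContinuousAt
    rw [← hsup]
    exact Filter.tendsto_sup.mpr ⟨hl, hr⟩


end NWD

section Assembly

lemma dinf_le_of_bound_s11 {f g : ℝ → ℝ} {c : ℝ} (hc : 0 ≤ c) (h : ∀ u, |f u - g u| ≤ c) :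
    dinf f g ≤ c := by
  unfold dinf
  have h1 : (⨆ x : ℝ, ENNReal.ofReal |f x - g x|) ≤ ENNReal.ofReal c :=
    iSup_le (fun x => ENNReal.ofReal_le_ofReal (h x))
  have h2 : min (⨆ x : ℝ, ENNReal.ofReal |f x - g x|) 1 ≤ ENNReal.ofReal c :=
    le_trans (min_le_left _ _) h1
  calc (min (⨆ x : ℝ, ENNReal.ofReal |f x - g x|) 1).toReal
      ≤ (ENNReal.ofReal c).toReal := ENNReal.toReal_mono ENNReal.ofReal_ne_top h2
    _ = c := ENNReal.toReal_ofReal hc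

lemma pointwise_of_dinf_lt {g h : ℝ → ℝ} {d : ℝ} (hd1 : d ≤ 1) (hlt : dinf g h < d) :
    ∀ u, |g u - h u| < d := by
  intro u
  unfold dinf at hlt
  set S := ⨆ x : ℝ, ENNReal.ofReal |g x - h x| with hS
  have hmin : min S 1 ≠ ⊤ :=
    ne_of_lt (lt_of_le_of_lt (min_le_right _ _) ENNReal.one_lt_top)
  have h2 : min S 1 < ENNReal.ofReal d := by
    rw [ENNReal.lt_ofReal_iff_toReal_lt hmin]
    exact hlt
  have hd1' : ENNReal.ofReal d ≤ 1 := by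
    rw [← ENNReal.ofReal_one]
    exact ENNReal.ofReal_le_ofReal hd1
  have hSd : S < ENNReal.ofReal d := by
    rcases min_cases S 1 with ⟨he, _⟩ | ⟨he, hle⟩
    · rwa [he] at h2
    · exfalso
      rw [he] at h2
      exact absurd (lt_of_lt_of_le h2 hd1') (lt_irrefl _)
  have hx : ENNReal.ofReal |g u - h u| < ENNReal.ofReal d :=
    lt_of_le_of_lt (le_iSup (fun x : ℝ => ENNReal.ofReal |g x - h x|) u) hSd
  exact (ENNReal.ofReal_lt_ofReal_iff_of_nonneg (abs_nonneg _)).mp hx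

lemma not_memUN {h : ℝ → ℝ} {c : ℝ} (hc : 0 < c)
    (hav : ∀ t : ℝ, c ≤ |h t| ∨ c ≤ |h (t+1)|) : ¬ memUN {x | Bdd x} h := by
  rintro ⟨-, H⟩
  have hzero := H (fun _ => 0) ⟨0, fun n => by simp⟩
  have hge : ENNReal.ofReal c ≤ ⨅ t : ℝ, gapSup h (fun _ => 0) t := by
    refine le_iInf (fun t => ?_)
    unfold gapSup
    rcases hav t with h1 | h1
    · calc ENNReal.ofReal c ≤ ENNReal.ofReal |h (t + ((0:ℕ):ℝ)) - 0| := by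
            apply ENNReal.ofReal_le_ofReal
            push_cast
            simpa using h1
        _ ≤ ⨆ n : ℕ, ENNReal.ofReal |h (t + n) - 0| :=
            le_iSup (fun n : ℕ => ENNReal.ofReal |h (t + n) - 0|) 0
    · calc ENNReal.ofReal c ≤ ENNReal.ofReal |h (t + ((1:ℕ):ℝ)) - 0| := by
            apply ENNReal.ofReal_le_ofReal
            push_cast
            simpa using h1
        _ ≤ ⨆ n : ℕ, ENNReal.ofReal |h (t + n) - 0| :=
            le_iSup (fun n : ℕ => ENNReal.ofReal |h (t + n) - 0|) 1
  rw [hzero] at hge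
  have h0 : ENNReal.ofReal c = 0 := le_antisymm hge zero_le
  rw [ENNReal.ofReal_eq_zero] at h0
  linarith

end Assembly

/-- U_N(ℓ^∞) is nowhere dense in (C(ℝ), d_∞). -/
theorem stmt11 :
    ∀ f : ℝ → ℝ, Continuous f → ∀ ε > (0 : ℝ),
      ∃ g : ℝ → ℝ, Continuous g ∧ dinf f g < ε ∧
        ∃ δ > (0 : ℝ), ∀ h : ℝ → ℝ, Continuous h → dinf g h < δ →
          ¬ memUN {x | Bdd x} h := by
  intro f hf ε hε
  have hm0 : 0 < min ε 1 := lt_min hε one_pos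
  set β : ℝ := min ε 1 / 16 with hβdef
  have hβ : 0 < β := by rw [hβdef]; linarith
  obtain ⟨D⟩ := NWD.exists_dat hf hβ
  refine ⟨NWD.g D, NWD.g_cont D, ?_, β, hβ, ?_⟩
  · have hb : ∀ u, |f u - NWD.g D u| ≤ 5*β := fun u => by
      rw [abs_sub_comm]
      exact NWD.g_close D hβ u
    have hle : dinf f (NWD.g D) ≤ 5*β := dinf_le_of_bound_s11 (by linarith) hb
    have hlt : 5*β < ε := by
      have hm : min ε 1 ≤ ε := min_le_left _ _
      rw [hβdef]
      linarith
    linarith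
  · intro h _ hdh
    have hδ1 : β ≤ 1 := by
      have : min ε 1 ≤ 1 := min_le_right _ _
      rw [hβdef]
      linarith
    have hpw := pointwise_of_dinf_lt hδ1 hdh
    apply not_memUN hβ
    intro t
    have habs1 := abs_sub_abs_le_abs_sub (NWD.g D t) (h t)
    have habs2 := abs_sub_abs_le_abs_sub (NWD.g D (t+1)) (h (t+1))
    rcases NWD.main_avoid D hβ t with h1 | h1
    · left
      have := hpw t
      linarith
    · right
      have := hpw (t+1)
      linarith
end
end
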